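/- arXiv:1809.06950 — 2 statements merged into one kernel-verified Lean document; each statement's English description precedes it below -/
import Mathlib

section
/- In a graph G on n vertices with m edges and every any k-subset S whose induced subgraph has at least β·C(k,2) edges with β ≤ 16/25, the number of such subsets is at most m^((1−√(1−β))k + 1) · n^((2√(1−β) − 1)k + 2). -/
set_option linter.unusedSectionVars false

lemma arith_aux0 {v k s : ℝ} (hv : 0 ≤ v) (hs : 3/5 ≤ s) (hs2 : s < 1) (hk0 : 0 < k)
    (hvc : v + 1 ≤ (1 - s) * k) :
    4*v^2 + 6*v < (1 - s^2) * (k*(k-1)) := by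
  nlinarith [mul_le_mul_of_nonneg_right (by linarith : 1 - s ≤ 2/5) (le_of_lt hk0),
    mul_nonneg (by nlinarith : (0:ℝ) ≤ (1-s)*k - (v+1)) (by linarith : (0:ℝ) ≤ v),
    mul_nonneg (by nlinarith : (0:ℝ) ≤ (1-s)*k - (v+1)) (by nlinarith : (0:ℝ) ≤ (1-s)*k),
    mul_nonneg (mul_nonneg (by linarith : (0:ℝ) ≤ 1 - s) (le_of_lt hk0)) (by linarith : (0:ℝ) ≤ 1 + s - 8/5),
    mul_nonneg (by nlinarith : (0:ℝ) ≤ 2*k - 5*((1-s)*k)) (by nlinarith : (0:ℝ) ≤ (1-s)*k),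
    mul_nonneg (mul_nonneg (by nlinarith : (0:ℝ) ≤ 2*k - 5*((1-s)*k)) (by nlinarith : (0:ℝ) ≤ (1-s)*k)) (by linarith : (0:ℝ) ≤ 1 + s - 8/5),
    mul_nonneg (mul_nonneg (by linarith : (0:ℝ) ≤ 1+s-8/5) (by nlinarith : (0:ℝ) ≤ (1-s)*k)) (by nlinarith [mul_le_mul_of_nonneg_right (by linarith : 1 - s ≤ 2/5) (le_of_lt hk0)] : (0:ℝ) ≤ k - 1)]

lemma arith_aux1 {v k s : ℝ} (hv : 0 ≤ v) (hs : 3/5 ≤ s) (hs2 : s < 1) (hk0 : 0 < k)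
    (hvc : v + 1 ≤ (1 - s) * k) (h25 : 5*(v+1) ≤ 2*k) :
    2*v*k - v^2 - v < (1 - s^2) * (k*(k-1)) := by
  nlinarith [mul_nonneg (mul_nonneg (by nlinarith : (0:ℝ) ≤ k - 1) (by nlinarith : (0:ℝ) ≤ (1-s)*k - (v+1))) (by nlinarith : (0:ℝ) ≤ 2*k - (1-s)*k - (v+1)),
    mul_pos (by nlinarith : (0:ℝ) < 2*k - (v+1)) (by nlinarith : (0:ℝ) < k - (v+1)),
    hk0]

lemma arith_main {t q k s : ℝ} (ht : 0 ≤ t) (hq : 0 ≤ q) (hs : 3/5 ≤ s) (hs1 : s ≤ 1)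
    (hvc : t + q + 1 ≤ (1 - s) * k) :
    2*(t+q) + 2*(t*(k - 2*(t+q)) + 2*q) + (3*(t*t) - 3*t) + (4*(q*q) - 4*q)
      + 4*(t*q) + 2*(q*(t+2)) < (1 - s^2) * (k*(k-1)) := by
  have hs2 : s < 1 := by
    rcases lt_or_ge s 1 with h | h
    · exact h
    · exfalso
      have he : s = 1 := le_antisymm hs1 h
      rw [he] at hvc
      simp at hvc
      linarith
  have hk0 : (0:ℝ) < k := by nlinarith
  have h25 : 5*(t+q+1) ≤ 2*k := by
    nlinarith [mul_le_mul_of_nonneg_right (by linarith : 1 - s ≤ 2/5) (le_of_lt hk0)]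
  have hv : (0:ℝ) ≤ t + q := by linarith
  have hL0 := arith_aux0 (v := t+q) hv hs hs2 hk0 hvc
  have hL1 := arith_aux1 (v := t+q) hv hs hs2 hk0 hvc h25
  rcases eq_or_lt_of_le hv with h0 | h0
  · have ht0 : t = 0 := by linarith
    have hq0 : q = 0 := by linarith
    subst ht0; subst hq0
    nlinarith
  · have hiden : (t+q) * (2*(t+q) + 2*(t*(k - 2*(t+q)) + 2*q) + (3*(t*t) - 3*t) + (4*(q*q) - 4*q)
        + 4*(t*q) + 2*(q*(t+2))) ≤ q * (4*(t+q)^2 + 6*(t+q)) + t * (2*(t+q)*k - (t+q)^2 - (t+q)) := by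
      nlinarith [mul_nonneg (mul_nonneg ht hq) (le_of_lt h0)]
    have hcomb : q * (4*(t+q)^2 + 6*(t+q)) + t * (2*(t+q)*k - (t+q)^2 - (t+q)) <
        (t+q) * ((1 - s^2) * (k*(k-1))) := by
      rcases eq_or_lt_of_le ht with ht0 | ht0
      · have hq0 : 0 < q := by linarith
        have h1 : q * (4*(t+q)^2 + 6*(t+q)) < q * ((1 - s^2) * (k*(k-1))) :=
          mul_lt_mul_of_pos_left hL0 hq0
        have h2 : t * (2*(t+q)*k - (t+q)^2 - (t+q)) ≤ t * ((1 - s^2) * (k*(k-1))) := by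
          rw [← ht0]; simp
        nlinarith
      · have h1 : q * (4*(t+q)^2 + 6*(t+q)) ≤ q * ((1 - s^2) * (k*(k-1))) :=
          mul_le_mul_of_nonneg_left (le_of_lt hL0) hq
        have h2 : t * (2*(t+q)*k - (t+q)^2 - (t+q)) < t * ((1 - s^2) * (k*(k-1))) :=
          mul_lt_mul_of_pos_left hL1 ht0
        nlinarith
    have hfin := lt_of_le_of_lt hiden hcomb
    exact lt_of_mul_lt_mul_left hfin (le_of_lt h0)

namespace BetaCov

open Finset

variable {V : Type} [DecidableEq V] (G : SimpleGraph V) [DecidableRel G.Adj] (S : Finset V)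

def IsMat (P : Finset (V × V)) : Prop :=
  (∀ p ∈ P, G.Adj p.1 p.2 ∧ p.1 ∈ S ∧ p.2 ∈ S) ∧
  (∀ p ∈ P, ∀ q ∈ P, p ≠ q → p.1 ≠ q.1 ∧ p.1 ≠ q.2 ∧ p.2 ≠ q.1 ∧ p.2 ≠ q.2)

lemma isMat_empty : IsMat G S ∅ := by simp [IsMat]

lemma isMat_subset {P Q : Finset (V×V)} (h : IsMat G S P) (hQ : Q ⊆ P) : IsMat G S Q :=
  ⟨fun p hp => h.1 p (hQ hp), fun p hp q hq hne => h.2 p (hQ hp) q (hQ hq) hne⟩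

lemma exists_max_mat : ∃ P, IsMat G S P ∧ ∀ Q, IsMat G S Q → Q.card ≤ P.card := by
  classical
  obtain ⟨P, hP, hmax⟩ := Finset.exists_max_image
    ((S ×ˢ S).powerset.filter (fun P => IsMat G S P)) Finset.card
    ⟨∅, by simp [isMat_empty]⟩
  refine ⟨P, (Finset.mem_filter.1 hP).2, fun Q hQ => hmax Q ?_⟩
  refine Finset.mem_filter.2 ⟨Finset.mem_powerset.2 fun z hz => ?_, hQ⟩
  exact Finset.mem_product.2 ⟨(hQ.1 z hz).2.1, (hQ.1 z hz).2.2⟩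

variable {G S}

lemma augment {P : Finset (V×V)} (hP : IsMat G S P)
    (hmax : ∀ Q, IsMat G S Q → Q.card ≤ P.card)
    {R N : Finset (V×V)} (hR : R ⊆ P)
    (hN1 : ∀ z ∈ N, G.Adj z.1 z.2 ∧ z.1 ∈ S ∧ z.2 ∈ S)
    (hN2 : ∀ z ∈ N, ∀ z' ∈ N, z ≠ z' → z.1 ≠ z'.1 ∧ z.1 ≠ z'.2 ∧ z.2 ≠ z'.1 ∧ z.2 ≠ z'.2)
    (hN3 : ∀ z ∈ N, ∀ p ∈ P, p ∉ R → z.1 ≠ p.1 ∧ z.1 ≠ p.2 ∧ z.2 ≠ p.1 ∧ z.2 ≠ p.2)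
    (hcard : R.card < N.card) : False := by
  have hdisj : Disjoint (P \ R) N := by
    rw [Finset.disjoint_left]
    intro p hp hpN
    obtain ⟨h1, h2⟩ := Finset.mem_sdiff.1 hp
    exact (hN3 p hpN p h1 h2).1 rfl
  have hQmat : IsMat G S ((P \ R) ∪ N) := by
    constructor
    · intro p hp
      rcases Finset.mem_union.1 hp with h | h
      · exact hP.1 p (Finset.mem_sdiff.1 h).1
      · exact hN1 p h
    · intro p hp q hq hne
      rcases Finset.mem_union.1 hp with h | h <;> rcases Finset.mem_union.1 hq with h' | h'
      · exact hP.2 p (Finset.mem_sdiff.1 h).1 q (Finset.mem_sdiff.1 h').1 hne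
      · obtain ⟨a, b, c, d⟩ := hN3 q h' p (Finset.mem_sdiff.1 h).1 (Finset.mem_sdiff.1 h).2
        exact ⟨a.symm, c.symm, b.symm, d.symm⟩
      · exact hN3 p h q (Finset.mem_sdiff.1 h').1 (Finset.mem_sdiff.1 h').2
      · exact hN2 p h q h' hne
  have hc : ((P \ R) ∪ N).card = P.card - R.card + N.card := by
    rw [Finset.card_union_of_disjoint hdisj, Finset.card_sdiff_of_subset hR]
  have := hmax _ hQmat
  have hRP : R.card ≤ P.card := Finset.card_le_card hR
  omega


variable (G S)

def pairSet (P : Finset (V × V)) : Finset V := P.biUnion fun p => {p.1, p.2}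

def uns (P : Finset (V × V)) : Finset V := S \ pairSet P

def att (P : Finset (V × V)) (x : V) : Finset V := (uns S P).filter fun y => G.Adj x y

def IsStrong (P : Finset (V × V)) (p : V × V) : Prop :=
  2 ≤ (att G S P p.1).card ∨ 2 ≤ (att G S P p.2).card

instance decIsStrong (P : Finset (V × V)) (p : V × V) : Decidable (IsStrong G S P p) := by
  unfold IsStrong; infer_instance

noncomputable def apex (P : Finset (V × V)) (p : V × V) : V :=
  if 2 ≤ (att G S P p.1).card then p.1 else p.2

noncomputable def base (P : Finset (V × V)) (p : V × V) : V :=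
  if 2 ≤ (att G S P p.1).card then p.2 else p.1

variable {G S} {P : Finset (V × V)} {p q : V × V} {x u u' : V}

lemma mem_pairSet : x ∈ pairSet P ↔ ∃ p ∈ P, x = p.1 ∨ x = p.2 := by
  simp only [pairSet, mem_biUnion, mem_insert, mem_singleton]

lemma mem_uns : x ∈ uns S P ↔ x ∈ S ∧ ∀ p ∈ P, x ≠ p.1 ∧ x ≠ p.2 := by
  simp only [uns, mem_sdiff, mem_pairSet]
  constructor
  · rintro ⟨h1, h2⟩
    exact ⟨h1, fun p hp => ⟨fun h => h2 ⟨p, hp, Or.inl h⟩, fun h => h2 ⟨p, hp, Or.inr h⟩⟩⟩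
  · rintro ⟨h1, h2⟩
    exact ⟨h1, fun ⟨p, hp, h⟩ => h.elim (fun e => (h2 p hp).1 e) (fun e => (h2 p hp).2 e)⟩

lemma mem_att : u ∈ att G S P x ↔ u ∈ uns S P ∧ G.Adj x u := by
  simp [att, mem_filter]

lemma apex_or (P : Finset (V × V)) (p : V × V) :
    (apex G S P p = p.1 ∧ base G S P p = p.2) ∨ (apex G S P p = p.2 ∧ base G S P p = p.1) := by
  unfold apex base
  split <;> simp



-- structural lemmas (to append to main)
variable {y a b a' b' : V}

lemma pair_mem_S (hP : IsMat G S P) (hp : p ∈ P) (hx : x = p.1 ∨ x = p.2) : x ∈ S := by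
  rcases hx with rfl | rfl
  · exact (hP.1 p hp).2.1
  · exact (hP.1 p hp).2.2

lemma pfst_ne_psnd (hP : IsMat G S P) (hp : p ∈ P) : p.1 ≠ p.2 :=
  G.ne_of_adj (hP.1 p hp).1

lemma pair_ne_pair (hP : IsMat G S P) (hp : p ∈ P) (hq : q ∈ P) (hne : p ≠ q)
    (hx : x = p.1 ∨ x = p.2) (hy : y = q.1 ∨ y = q.2) : x ≠ y := by
  obtain ⟨h1, h2, h3, h4⟩ := hP.2 p hp q hq hne
  rcases hx with rfl | rfl <;> rcases hy with rfl | rfl <;> assumption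

lemma uns_ne_pair (hu : u ∈ uns S P) (hq : q ∈ P) (hy : y = q.1 ∨ y = q.2) : u ≠ y := by
  obtain ⟨-, h⟩ := mem_uns.1 hu
  rcases hy with rfl | rfl
  · exact (h q hq).1
  · exact (h q hq).2

lemma uns_mem_S (hu : u ∈ uns S P) : u ∈ S := (Finset.mem_sdiff.1 hu).1

lemma apex_mem_or (p : V × V) : apex G S P p = p.1 ∨ apex G S P p = p.2 := by
  rcases apex_or (G := G) (S := S) P p with ⟨h, -⟩ | ⟨h, -⟩ <;> [exact Or.inl h; exact Or.inr h]

lemma base_mem_or (p : V × V) : base G S P p = p.1 ∨ base G S P p = p.2 := by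
  rcases apex_or (G := G) (S := S) P p with ⟨-, h⟩ | ⟨-, h⟩ <;> [exact Or.inr h; exact Or.inl h]

lemma apex_ne_base (hP : IsMat G S P) (hp : p ∈ P) : apex G S P p ≠ base G S P p := by
  rcases apex_or (G := G) (S := S) P p with ⟨h1, h2⟩ | ⟨h1, h2⟩ <;> rw [h1, h2]
  · exact pfst_ne_psnd hP hp
  · exact (pfst_ne_psnd hP hp).symm

lemma strong_apex_card (hs : IsStrong G S P p) : 2 ≤ (att G S P (apex G S P p)).card := by
  unfold apex
  split
  · assumption
  · rcases hs with h | h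
    · omega
    · exact h

lemma uns_indep (hP : IsMat G S P) (hmax : ∀ Q, IsMat G S Q → Q.card ≤ P.card)
    (hu : u ∈ uns S P) (hu' : u' ∈ uns S P) : ¬ G.Adj u u' := by
  intro hadj
  refine augment hP hmax (R := ∅) (N := {(u, u')}) (Finset.empty_subset _) ?_ ?_ ?_ (by simp)
  · intro z hz
    rw [Finset.mem_singleton] at hz
    subst hz
    exact ⟨hadj, uns_mem_S hu, uns_mem_S hu'⟩
  · intro z hz z' hz' hne
    rw [Finset.mem_singleton] at hz hz'
    subst hz; subst hz'
    exact absurd rfl hne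
  · intro z hz q hq _
    rw [Finset.mem_singleton] at hz
    subst hz
    exact ⟨uns_ne_pair hu hq (Or.inl rfl), uns_ne_pair hu hq (Or.inr rfl),
      uns_ne_pair hu' hq (Or.inl rfl), uns_ne_pair hu' hq (Or.inr rfl)⟩

lemma att_base_empty (hP : IsMat G S P) (hmax : ∀ Q, IsMat G S Q → Q.card ≤ P.card)
    (hp : p ∈ P) (hs : IsStrong G S P p) : att G S P (base G S P p) = ∅ := by
  by_contra hne
  obtain ⟨u', hu'⟩ := Finset.nonempty_iff_ne_empty.2 hne
  obtain ⟨hu'uns, hu'adj⟩ := mem_att.1 hu'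
  have hsc : 2 ≤ (att G S P (apex G S P p)).card := strong_apex_card hs
  obtain ⟨u, hu, huu'⟩ := Finset.exists_mem_ne
    (s := att G S P (apex G S P p)) (by omega) u'
  obtain ⟨huuns, huadj⟩ := mem_att.1 hu
  set a := apex G S P p with ha
  set b := base G S P p with hb
  have hao : a = p.1 ∨ a = p.2 := apex_mem_or p
  have hbo : b = p.1 ∨ b = p.2 := base_mem_or p
  have hab : a ≠ b := apex_ne_base hP hp
  refine augment hP hmax (R := {p}) (N := {(a, u), (b, u')}) (by simp [hp]) ?_ ?_ ?_ ?_
  · intro z hz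
    simp only [Finset.mem_insert, Finset.mem_singleton] at hz
    rcases hz with rfl | rfl
    · exact ⟨huadj, pair_mem_S hP hp hao, uns_mem_S huuns⟩
    · exact ⟨hu'adj, pair_mem_S hP hp hbo, uns_mem_S hu'uns⟩
  · intro z hz z' hz' hne
    have D : (a, u).1 ≠ (b, u').1 ∧ (a, u).1 ≠ (b, u').2 ∧ (a, u).2 ≠ (b, u').1 ∧ (a, u).2 ≠ (b, u').2 :=
      ⟨hab, (uns_ne_pair hu'uns hp hao).symm, uns_ne_pair huuns hp hbo, huu'⟩
    simp only [Finset.mem_insert, Finset.mem_singleton] at hz hz'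
    rcases hz with rfl | rfl <;> rcases hz' with rfl | rfl
    · exact absurd rfl hne
    · exact D
    · exact ⟨D.1.symm, D.2.2.1.symm, D.2.1.symm, D.2.2.2.symm⟩
    · exact absurd rfl hne
  · intro z hz q hq hqR
    have hpq : p ≠ q := fun h => hqR (by simp [h])
    simp only [Finset.mem_insert, Finset.mem_singleton] at hz
    rcases hz with rfl | rfl
    · exact ⟨pair_ne_pair hP hp hq hpq hao (Or.inl rfl), pair_ne_pair hP hp hq hpq hao (Or.inr rfl),
        uns_ne_pair huuns hq (Or.inl rfl), uns_ne_pair huuns hq (Or.inr rfl)⟩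
    · exact ⟨pair_ne_pair hP hp hq hpq hbo (Or.inl rfl), pair_ne_pair hP hp hq hpq hbo (Or.inr rfl),
        uns_ne_pair hu'uns hq (Or.inl rfl), uns_ne_pair hu'uns hq (Or.inr rfl)⟩
  · have : (a, u) ∉ ({(b, u')} : Finset (V × V)) := by
      simp only [Finset.mem_singleton]
      intro h
      exact hab (congrArg Prod.fst h)
    rw [Finset.card_insert_of_notMem this]
    simp

lemma sym4 {z z' : V × V} (h : z.1 ≠ z'.1 ∧ z.1 ≠ z'.2 ∧ z.2 ≠ z'.1 ∧ z.2 ≠ z'.2) :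
    z'.1 ≠ z.1 ∧ z'.1 ≠ z.2 ∧ z'.2 ≠ z.1 ∧ z'.2 ≠ z.2 :=
  ⟨h.1.symm, h.2.2.1.symm, h.2.1.symm, h.2.2.2.symm⟩

lemma no_bb (hP : IsMat G S P) (hmax : ∀ Q, IsMat G S Q → Q.card ≤ P.card)
    (hp : p ∈ P) (hq : q ∈ P) (hpq : p ≠ q)
    (hsp : IsStrong G S P p) (hsq : IsStrong G S P q) :
    ¬ G.Adj (base G S P p) (base G S P q) := by
  intro hadj
  set a := apex G S P p with ha
  set b := base G S P p with hb
  set a' := apex G S P q with ha'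
  set b' := base G S P q with hb'
  have hao : a = p.1 ∨ a = p.2 := apex_mem_or p
  have hbo : b = p.1 ∨ b = p.2 := base_mem_or p
  have ha'o : a' = q.1 ∨ a' = q.2 := apex_mem_or q
  have hb'o : b' = q.1 ∨ b' = q.2 := base_mem_or q
  have hab : a ≠ b := apex_ne_base hP hp
  have ha'b' : a' ≠ b' := apex_ne_base hP hq
  have hscq : 2 ≤ (att G S P a').card := strong_apex_card hsq
  obtain ⟨u', hu'⟩ := Finset.card_pos.1 (by omega : 0 < (att G S P a').card)
  obtain ⟨hu'uns, hu'adj⟩ := mem_att.1 hu'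
  have hscp : 2 ≤ (att G S P a).card := strong_apex_card hsp
  obtain ⟨u, hu, huu'⟩ := Finset.exists_mem_ne (s := att G S P a) (by omega) u'
  obtain ⟨huuns, huadj⟩ := mem_att.1 hu
  have D12 : (a,u).1 ≠ (a',u').1 ∧ (a,u).1 ≠ (a',u').2 ∧ (a,u).2 ≠ (a',u').1 ∧ (a,u).2 ≠ (a',u').2 :=
    ⟨pair_ne_pair hP hp hq hpq hao ha'o, (uns_ne_pair hu'uns hp hao).symm,
     uns_ne_pair huuns hq ha'o, huu'⟩
  have D13 : (a,u).1 ≠ (b,b').1 ∧ (a,u).1 ≠ (b,b').2 ∧ (a,u).2 ≠ (b,b').1 ∧ (a,u).2 ≠ (b,b').2 :=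
    ⟨hab, pair_ne_pair hP hp hq hpq hao hb'o, uns_ne_pair huuns hp hbo, uns_ne_pair huuns hq hb'o⟩
  have D23 : (a',u').1 ≠ (b,b').1 ∧ (a',u').1 ≠ (b,b').2 ∧ (a',u').2 ≠ (b,b').1 ∧ (a',u').2 ≠ (b,b').2 :=
    ⟨pair_ne_pair hP hq hp hpq.symm ha'o hbo, ha'b',
     uns_ne_pair hu'uns hp hbo, uns_ne_pair hu'uns hq hb'o⟩
  refine augment hP hmax (R := {p, q}) (N := {(a,u), (a',u'), (b,b')})
    (by simp [Finset.insert_subset_iff, hp, hq]) ?_ ?_ ?_ ?_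
  · intro z hz
    simp only [Finset.mem_insert, Finset.mem_singleton] at hz
    rcases hz with rfl | rfl | rfl
    · exact ⟨huadj, pair_mem_S hP hp hao, uns_mem_S huuns⟩
    · exact ⟨hu'adj, pair_mem_S hP hq ha'o, uns_mem_S hu'uns⟩
    · exact ⟨hadj, pair_mem_S hP hp hbo, pair_mem_S hP hq hb'o⟩
  · intro z hz z' hz' hne
    simp only [Finset.mem_insert, Finset.mem_singleton] at hz hz'
    rcases hz with rfl | rfl | rfl <;> rcases hz' with rfl | rfl | rfl
    · exact absurd rfl hne
    · exact D12
    · exact D13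
    · exact sym4 D12
    · exact absurd rfl hne
    · exact D23
    · exact sym4 D13
    · exact sym4 D23
    · exact absurd rfl hne
  · intro z hz r hr hrR
    have hpr : p ≠ r := fun h => hrR (by simp [h])
    have hqr : q ≠ r := fun h => hrR (by simp [h])
    simp only [Finset.mem_insert, Finset.mem_singleton] at hz
    rcases hz with rfl | rfl | rfl
    · exact ⟨pair_ne_pair hP hp hr hpr hao (Or.inl rfl), pair_ne_pair hP hp hr hpr hao (Or.inr rfl),
        uns_ne_pair huuns hr (Or.inl rfl), uns_ne_pair huuns hr (Or.inr rfl)⟩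
    · exact ⟨pair_ne_pair hP hq hr hqr ha'o (Or.inl rfl), pair_ne_pair hP hq hr hqr ha'o (Or.inr rfl),
        uns_ne_pair hu'uns hr (Or.inl rfl), uns_ne_pair hu'uns hr (Or.inr rfl)⟩
    · exact ⟨pair_ne_pair hP hp hr hpr hbo (Or.inl rfl), pair_ne_pair hP hp hr hpr hbo (Or.inr rfl),
        pair_ne_pair hP hq hr hqr hb'o (Or.inl rfl), pair_ne_pair hP hq hr hqr hb'o (Or.inr rfl)⟩
  · have e1 : (a,u) ∉ ({(a',u'), (b,b')} : Finset (V × V)) := by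
      simp only [Finset.mem_insert, Finset.mem_singleton, Prod.mk.injEq, not_or]
      exact ⟨fun h => D12.1 h.1, fun h => D13.1 h.1⟩
    have e2 : (a',u') ∉ ({(b,b')} : Finset (V × V)) := by
      simp only [Finset.mem_singleton, Prod.mk.injEq, not_or]
      exact fun h => D23.1 h.1
    have e3 : p ∉ ({q} : Finset (V × V)) := by simpa using hpq
    rw [Finset.card_insert_of_notMem e1, Finset.card_insert_of_notMem e2,
      Finset.card_insert_of_notMem e3]
    simp

lemma no_bxyb {l : V × V} (hP : IsMat G S P) (hmax : ∀ Q, IsMat G S Q → Q.card ≤ P.card)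
    (hp : p ∈ P) (hq : q ∈ P) (hl : l ∈ P) (hpq : p ≠ q) (hlp : l ≠ p) (hlq : l ≠ q)
    (hsp : IsStrong G S P p) (hsq : IsStrong G S P q)
    (hxy : (x = l.1 ∧ y = l.2) ∨ (x = l.2 ∧ y = l.1))
    (hc1 : G.Adj (base G S P p) x) (hc2 : G.Adj y (base G S P q)) : False := by
  set a := apex G S P p with ha
  set b := base G S P p with hb
  set a' := apex G S P q with ha'
  set b' := base G S P q with hb'
  have hao : a = p.1 ∨ a = p.2 := apex_mem_or p
  have hbo : b = p.1 ∨ b = p.2 := base_mem_or p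
  have ha'o : a' = q.1 ∨ a' = q.2 := apex_mem_or q
  have hb'o : b' = q.1 ∨ b' = q.2 := base_mem_or q
  have xo : x = l.1 ∨ x = l.2 := hxy.elim (fun h => Or.inl h.1) (fun h => Or.inr h.1)
  have yo : y = l.1 ∨ y = l.2 := hxy.elim (fun h => Or.inr h.2) (fun h => Or.inl h.2)
  have hxyne : x ≠ y := by
    rcases hxy with ⟨rfl, rfl⟩ | ⟨rfl, rfl⟩
    · exact pfst_ne_psnd hP hl
    · exact (pfst_ne_psnd hP hl).symm
  have hab : a ≠ b := apex_ne_base hP hp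
  have ha'b' : a' ≠ b' := apex_ne_base hP hq
  have hscq : 2 ≤ (att G S P a').card := strong_apex_card hsq
  obtain ⟨u', hu'⟩ := Finset.card_pos.1 (by omega : 0 < (att G S P a').card)
  obtain ⟨hu'uns, hu'adj⟩ := mem_att.1 hu'
  have hscp : 2 ≤ (att G S P a).card := strong_apex_card hsp
  obtain ⟨u, hu, huu'⟩ := Finset.exists_mem_ne (s := att G S P a) (by omega) u'
  obtain ⟨huuns, huadj⟩ := mem_att.1 hu
  have D12 : (a,u).1 ≠ (b,x).1 ∧ (a,u).1 ≠ (b,x).2 ∧ (a,u).2 ≠ (b,x).1 ∧ (a,u).2 ≠ (b,x).2 :=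
    ⟨hab, pair_ne_pair hP hp hl hlp.symm hao xo, uns_ne_pair huuns hp hbo, uns_ne_pair huuns hl xo⟩
  have D13 : (a,u).1 ≠ (y,b').1 ∧ (a,u).1 ≠ (y,b').2 ∧ (a,u).2 ≠ (y,b').1 ∧ (a,u).2 ≠ (y,b').2 :=
    ⟨pair_ne_pair hP hp hl hlp.symm hao yo, pair_ne_pair hP hp hq hpq hao hb'o,
     uns_ne_pair huuns hl yo, uns_ne_pair huuns hq hb'o⟩
  have D14 : (a,u).1 ≠ (a',u').1 ∧ (a,u).1 ≠ (a',u').2 ∧ (a,u).2 ≠ (a',u').1 ∧ (a,u).2 ≠ (a',u').2 :=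
    ⟨pair_ne_pair hP hp hq hpq hao ha'o, (uns_ne_pair hu'uns hp hao).symm,
     uns_ne_pair huuns hq ha'o, huu'⟩
  have D23 : (b,x).1 ≠ (y,b').1 ∧ (b,x).1 ≠ (y,b').2 ∧ (b,x).2 ≠ (y,b').1 ∧ (b,x).2 ≠ (y,b').2 :=
    ⟨pair_ne_pair hP hp hl hlp.symm hbo yo, pair_ne_pair hP hp hq hpq hbo hb'o,
     hxyne, pair_ne_pair hP hl hq hlq xo hb'o⟩
  have D24 : (b,x).1 ≠ (a',u').1 ∧ (b,x).1 ≠ (a',u').2 ∧ (b,x).2 ≠ (a',u').1 ∧ (b,x).2 ≠ (a',u').2 :=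
    ⟨pair_ne_pair hP hp hq hpq hbo ha'o, (uns_ne_pair hu'uns hp hbo).symm,
     pair_ne_pair hP hl hq hlq xo ha'o, (uns_ne_pair hu'uns hl xo).symm⟩
  have D34 : (y,b').1 ≠ (a',u').1 ∧ (y,b').1 ≠ (a',u').2 ∧ (y,b').2 ≠ (a',u').1 ∧ (y,b').2 ≠ (a',u').2 :=
    ⟨pair_ne_pair hP hl hq hlq yo ha'o, (uns_ne_pair hu'uns hl yo).symm,
     ha'b'.symm, (uns_ne_pair hu'uns hq hb'o).symm⟩
  refine augment hP hmax (R := {p, q, l}) (N := {(a,u), (b,x), (y,b'), (a',u')})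
    (by simp [Finset.insert_subset_iff, hp, hq, hl]) ?_ ?_ ?_ ?_
  · intro z hz
    simp only [Finset.mem_insert, Finset.mem_singleton] at hz
    rcases hz with rfl | rfl | rfl | rfl
    · exact ⟨huadj, pair_mem_S hP hp hao, uns_mem_S huuns⟩
    · exact ⟨hc1, pair_mem_S hP hp hbo, pair_mem_S hP hl xo⟩
    · exact ⟨hc2, pair_mem_S hP hl yo, pair_mem_S hP hq hb'o⟩
    · exact ⟨hu'adj, pair_mem_S hP hq ha'o, uns_mem_S hu'uns⟩
  · intro z hz z' hz' hne
    simp only [Finset.mem_insert, Finset.mem_singleton] at hz hz'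
    rcases hz with rfl | rfl | rfl | rfl <;> rcases hz' with rfl | rfl | rfl | rfl
    · exact absurd rfl hne
    · exact D12
    · exact D13
    · exact D14
    · exact sym4 D12
    · exact absurd rfl hne
    · exact D23
    · exact D24
    · exact sym4 D13
    · exact sym4 D23
    · exact absurd rfl hne
    · exact D34
    · exact sym4 D14
    · exact sym4 D24
    · exact sym4 D34
    · exact absurd rfl hne
  · intro z hz r hr hrR
    have hpr : p ≠ r := fun h => hrR (by simp [h])
    have hqr : q ≠ r := fun h => hrR (by simp [h])
    have hlr : l ≠ r := fun h => hrR (by simp [h])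
    simp only [Finset.mem_insert, Finset.mem_singleton] at hz
    rcases hz with rfl | rfl | rfl | rfl
    · exact ⟨pair_ne_pair hP hp hr hpr hao (Or.inl rfl), pair_ne_pair hP hp hr hpr hao (Or.inr rfl),
        uns_ne_pair huuns hr (Or.inl rfl), uns_ne_pair huuns hr (Or.inr rfl)⟩
    · exact ⟨pair_ne_pair hP hp hr hpr hbo (Or.inl rfl), pair_ne_pair hP hp hr hpr hbo (Or.inr rfl),
        pair_ne_pair hP hl hr hlr xo (Or.inl rfl), pair_ne_pair hP hl hr hlr xo (Or.inr rfl)⟩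
    · exact ⟨pair_ne_pair hP hl hr hlr yo (Or.inl rfl), pair_ne_pair hP hl hr hlr yo (Or.inr rfl),
        pair_ne_pair hP hq hr hqr hb'o (Or.inl rfl), pair_ne_pair hP hq hr hqr hb'o (Or.inr rfl)⟩
    · exact ⟨pair_ne_pair hP hq hr hqr ha'o (Or.inl rfl), pair_ne_pair hP hq hr hqr ha'o (Or.inr rfl),
        uns_ne_pair hu'uns hr (Or.inl rfl), uns_ne_pair hu'uns hr (Or.inr rfl)⟩
  · have e1 : (a,u) ∉ ({(b,x), (y,b'), (a',u')} : Finset (V × V)) := by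
      simp only [Finset.mem_insert, Finset.mem_singleton, Prod.mk.injEq, not_or]
      exact ⟨fun h => D12.1 h.1, fun h => D13.1 h.1, fun h => D14.1 h.1⟩
    have e2 : (b,x) ∉ ({(y,b'), (a',u')} : Finset (V × V)) := by
      simp only [Finset.mem_insert, Finset.mem_singleton, Prod.mk.injEq, not_or]
      exact ⟨fun h => D23.1 h.1, fun h => D24.1 h.1⟩
    have e3 : (y,b') ∉ ({(a',u')} : Finset (V × V)) := by
      simp only [Finset.mem_singleton, Prod.mk.injEq, not_or]
      exact fun h => D34.1 h.1
    have f1 : p ∉ ({q, l} : Finset (V × V)) := by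
      simp only [Finset.mem_insert, Finset.mem_singleton, not_or]
      exact ⟨hpq, fun h => hlp h.symm⟩
    have f2 : q ∉ ({l} : Finset (V × V)) := by
      simp only [Finset.mem_singleton]
      exact fun h => hlq h.symm
    rw [Finset.card_insert_of_notMem e1, Finset.card_insert_of_notMem e2,
      Finset.card_insert_of_notMem e3, Finset.card_insert_of_notMem f1,
      Finset.card_insert_of_notMem f2]
    simp

variable (G S)

def DD : Finset (V × V) := (S ×ˢ S).filter fun z => G.Adj z.1 z.2

variable (P)

def TT : Finset (V × V) := P.filter (fun p => IsStrong G S P p)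
def QQ : Finset (V × V) := P.filter (fun p => ¬ IsStrong G S P p)

def B1 : Finset (V × V) := P.biUnion fun p => ({(p.1, p.2), (p.2, p.1)} : Finset (V × V))
def B2 : Finset (V × V) :=
  P.biUnion fun p => (DD G S).filter fun z => (z.1 = p.1 ∨ z.1 = p.2) ∧ z.2 ∈ uns S P
def B3 : Finset (V × V) :=
  P.biUnion fun p => (DD G S).filter fun z => z.1 ∈ uns S P ∧ (z.2 = p.1 ∨ z.2 = p.2)
noncomputable def B4ss : Finset (V × V) :=
  (TT G S P).offDiag.biUnion fun pq =>
    (DD G S).filter fun z => (z.1 = pq.1.1 ∨ z.1 = pq.1.2) ∧ (z.2 = pq.2.1 ∨ z.2 = pq.2.2)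
noncomputable def B4nn : Finset (V × V) :=
  (QQ G S P).offDiag.biUnion fun pq =>
    (DD G S).filter fun z => (z.1 = pq.1.1 ∨ z.1 = pq.1.2) ∧ (z.2 = pq.2.1 ∨ z.2 = pq.2.2)
noncomputable def B4sna : Finset (V × V) :=
  ((TT G S P) ×ˢ (QQ G S P)).biUnion fun pq =>
    (DD G S).filter fun z => z.1 = apex G S P pq.1 ∧ (z.2 = pq.2.1 ∨ z.2 = pq.2.2)
noncomputable def B4snb : Finset (V × V) :=
  (QQ G S P).biUnion fun l =>
    (DD G S).filter fun z => (∃ p ∈ TT G S P, z.1 = base G S P p) ∧ (z.2 = l.1 ∨ z.2 = l.2)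
noncomputable def B4nsa : Finset (V × V) :=
  ((TT G S P) ×ˢ (QQ G S P)).biUnion fun pq =>
    (DD G S).filter fun z => (z.1 = pq.2.1 ∨ z.1 = pq.2.2) ∧ z.2 = apex G S P pq.1
noncomputable def B4nsb : Finset (V × V) :=
  (QQ G S P).biUnion fun l =>
    (DD G S).filter fun z => (z.1 = l.1 ∨ z.1 = l.2) ∧ (∃ p ∈ TT G S P, z.2 = base G S P p)

variable {G S P}

lemma mem_DD {z : V × V} : z ∈ DD G S ↔ z.1 ∈ S ∧ z.2 ∈ S ∧ G.Adj z.1 z.2 := by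
  simp [DD, Finset.mem_filter, Finset.mem_product, and_assoc]

lemma apex_or_base (hx : x = p.1 ∨ x = p.2) :
    x = apex G S P p ∨ x = base G S P p := by
  rcases apex_or (G := G) (S := S) P p with ⟨e1, e2⟩ | ⟨e1, e2⟩ <;> rcases hx with rfl | rfl
  · exact Or.inl e1.symm
  · exact Or.inr e2.symm
  · exact Or.inr e2.symm
  · exact Or.inl e1.symm

lemma cover (hP : IsMat G S P) (hmax : ∀ Q, IsMat G S Q → Q.card ≤ P.card) :
    DD G S ⊆ B1 P ∪ B2 G S P ∪ B3 G S P ∪ B4ss G S P ∪ B4nn G S P ∪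
      B4sna G S P ∪ B4snb G S P ∪ B4nsa G S P ∪ B4nsb G S P := by
  intro z hz
  obtain ⟨h1, h2, hadj⟩ := mem_DD.1 hz
  simp only [Finset.mem_union]
  by_cases hz1 : z.1 ∈ pairSet P <;> by_cases hz2 : z.2 ∈ pairSet P
  · -- both matched
    obtain ⟨p, hp, hzo1⟩ := mem_pairSet.1 hz1
    obtain ⟨q, hq, hzo2⟩ := mem_pairSet.1 hz2
    by_cases hpq : p = q
    · subst hpq
      refine Or.inl (Or.inl (Or.inl (Or.inl (Or.inl (Or.inl (Or.inl (Or.inl ?_)))))))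
      have hne : z.1 ≠ z.2 := G.ne_of_adj hadj
      refine Finset.mem_biUnion.2 ⟨p, hp, ?_⟩
      simp only [Finset.mem_insert, Finset.mem_singleton]
      rcases hzo1 with e1 | e1 <;> rcases hzo2 with e2 | e2
      · exact absurd (e1.trans e2.symm) hne
      · exact Or.inl (Prod.ext e1 e2)
      · exact Or.inr (Prod.ext e1 e2)
      · exact absurd (e1.trans e2.symm) hne
    · by_cases hsp : IsStrong G S P p <;> by_cases hsq : IsStrong G S P q
      · refine Or.inl (Or.inl (Or.inl (Or.inl (Or.inl (Or.inr ?_)))))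
        refine Finset.mem_biUnion.2 ⟨(p, q), Finset.mem_offDiag.2
          ⟨Finset.mem_filter.2 ⟨hp, hsp⟩, Finset.mem_filter.2 ⟨hq, hsq⟩, hpq⟩, ?_⟩
        exact Finset.mem_filter.2 ⟨hz, hzo1, hzo2⟩
      · -- p strong, q not
        rcases apex_or_base (G := G) (S := S) (P := P) hzo1 with e | e
        · refine Or.inl (Or.inl (Or.inl (Or.inr ?_)))
          refine Finset.mem_biUnion.2 ⟨(p, q), Finset.mem_product.2
            ⟨Finset.mem_filter.2 ⟨hp, hsp⟩, Finset.mem_filter.2 ⟨hq, hsq⟩⟩, ?_⟩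
          exact Finset.mem_filter.2 ⟨hz, e, hzo2⟩
        · refine Or.inl (Or.inl (Or.inr ?_))
          refine Finset.mem_biUnion.2 ⟨q, Finset.mem_filter.2 ⟨hq, hsq⟩, ?_⟩
          exact Finset.mem_filter.2 ⟨hz, ⟨p, Finset.mem_filter.2 ⟨hp, hsp⟩, e⟩, hzo2⟩
      · -- q strong, p not
        rcases apex_or_base (G := G) (S := S) (P := P) hzo2 with e | e
        · refine Or.inl (Or.inr ?_)
          refine Finset.mem_biUnion.2 ⟨(q, p), Finset.mem_product.2
            ⟨Finset.mem_filter.2 ⟨hq, hsq⟩, Finset.mem_filter.2 ⟨hp, hsp⟩⟩, ?_⟩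
          exact Finset.mem_filter.2 ⟨hz, hzo1, e⟩
        · refine Or.inr ?_
          refine Finset.mem_biUnion.2 ⟨p, Finset.mem_filter.2 ⟨hp, hsp⟩, ?_⟩
          exact Finset.mem_filter.2 ⟨hz, hzo1, ⟨q, Finset.mem_filter.2 ⟨hq, hsq⟩, e⟩⟩
      · refine Or.inl (Or.inl (Or.inl (Or.inl (Or.inr ?_))))
        refine Finset.mem_biUnion.2 ⟨(p, q), Finset.mem_offDiag.2
          ⟨Finset.mem_filter.2 ⟨hp, hsp⟩, Finset.mem_filter.2 ⟨hq, hsq⟩, hpq⟩, ?_⟩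
        exact Finset.mem_filter.2 ⟨hz, hzo1, hzo2⟩
  · -- z.1 matched, z.2 unmatched
    obtain ⟨p, hp, hzo1⟩ := mem_pairSet.1 hz1
    refine Or.inl (Or.inl (Or.inl (Or.inl (Or.inl (Or.inl (Or.inl (Or.inr ?_)))))))
    refine Finset.mem_biUnion.2 ⟨p, hp, ?_⟩
    exact Finset.mem_filter.2 ⟨hz, hzo1, Finset.mem_sdiff.2 ⟨h2, hz2⟩⟩
  · obtain ⟨p, hp, hzo2⟩ := mem_pairSet.1 hz2
    refine Or.inl (Or.inl (Or.inl (Or.inl (Or.inl (Or.inl (Or.inr ?_))))))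
    refine Finset.mem_biUnion.2 ⟨p, hp, ?_⟩
    exact Finset.mem_filter.2 ⟨hz, Finset.mem_sdiff.2 ⟨h1, hz1⟩, hzo2⟩
  · exact absurd hadj (uns_indep hP hmax (Finset.mem_sdiff.2 ⟨h1, hz1⟩) (Finset.mem_sdiff.2 ⟨h2, hz2⟩))

lemma card_pair_le_two (a b : V) : ({(a, b), (b, a)} : Finset (V × V)).card ≤ 2 :=
  le_trans (Finset.card_insert_le _ _) (by simp)

lemma card_B1_le : (B1 P).card ≤ 2 * P.card := by
  refine le_trans Finset.card_biUnion_le ?_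
  refine le_trans (Finset.sum_le_sum (fun p _ => card_pair_le_two p.1 p.2)) ?_
  simp [Finset.sum_const, mul_comm]

lemma fiber_toU_strong (hP : IsMat G S P) (hmax : ∀ Q, IsMat G S Q → Q.card ≤ P.card)
    (hp : p ∈ P) (hs : IsStrong G S P p) :
    ((DD G S).filter fun z => (z.1 = p.1 ∨ z.1 = p.2) ∧ z.2 ∈ uns S P).card ≤ (uns S P).card := by
  have key : ∀ w ∈ (DD G S).filter fun z => (z.1 = p.1 ∨ z.1 = p.2) ∧ z.2 ∈ uns S P,
      w.1 = apex G S P p := by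
    intro w hw
    obtain ⟨hwD, hwo, hwu⟩ := Finset.mem_filter.1 hw
    rcases apex_or_base (G := G) (S := S) (P := P) hwo with e | e
    · exact e
    · exfalso
      have : w.2 ∈ att G S P (base G S P p) :=
        mem_att.2 ⟨hwu, by rw [← e]; exact (mem_DD.1 hwD).2.2⟩
      rw [att_base_empty hP hmax hp hs] at this
      simp at this
  refine Finset.card_le_card_of_injOn (fun z => z.2) (fun z hz => (Finset.mem_filter.1 hz).2.2) ?_
  intro z hz z' hz' he
  exact Prod.ext ((key z hz).trans (key z' hz').symm) he

lemma fiber_toU_weak (hp : p ∈ P) (hs : ¬ IsStrong G S P p) :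
    ((DD G S).filter fun z => (z.1 = p.1 ∨ z.1 = p.2) ∧ z.2 ∈ uns S P).card ≤ 2 := by
  have hc : ∀ x, ¬ (2 ≤ (att G S P x).card) → (att G S P x).card ≤ 1 := fun x h => by omega
  rw [IsStrong, not_or] at hs
  have hsub : ((DD G S).filter fun z => (z.1 = p.1 ∨ z.1 = p.2) ∧ z.2 ∈ uns S P) ⊆
      ((DD G S).filter fun z => z.1 = p.1 ∧ z.2 ∈ uns S P) ∪
      ((DD G S).filter fun z => z.1 = p.2 ∧ z.2 ∈ uns S P) := by
    intro z hz
    obtain ⟨hzD, hzo, hzu⟩ := Finset.mem_filter.1 hz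
    rcases hzo with e | e
    · exact Finset.mem_union_left _ (Finset.mem_filter.2 ⟨hzD, e, hzu⟩)
    · exact Finset.mem_union_right _ (Finset.mem_filter.2 ⟨hzD, e, hzu⟩)
  have h1 : ∀ (c : V), ((DD G S).filter fun z => z.1 = c ∧ z.2 ∈ uns S P).card ≤ (att G S P c).card := by
    intro c
    refine Finset.card_le_card_of_injOn (fun z => z.2) ?_ ?_
    · intro z hz
      obtain ⟨hzD, e, hzu⟩ := Finset.mem_filter.1 hz
      exact mem_att.2 ⟨hzu, by rw [← e]; exact (mem_DD.1 hzD).2.2⟩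
    · intro z hz z' hz' he
      exact Prod.ext (((Finset.mem_filter.1 hz).2.1).trans ((Finset.mem_filter.1 hz').2.1).symm) he
  have := h1 p.1
  have := h1 p.2
  have := hc p.1 hs.1
  have := hc p.2 hs.2
  have := Finset.card_union_le ((DD G S).filter fun z => z.1 = p.1 ∧ z.2 ∈ uns S P)
    ((DD G S).filter fun z => z.1 = p.2 ∧ z.2 ∈ uns S P)
  have := Finset.card_le_card hsub
  omega

lemma card_B2_le (hP : IsMat G S P) (hmax : ∀ Q, IsMat G S Q → Q.card ≤ P.card) :
    (B2 G S P).card ≤ (TT G S P).card * (uns S P).card + 2 * (QQ G S P).card := by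
  refine le_trans Finset.card_biUnion_le ?_
  rw [← Finset.sum_filter_add_sum_filter_not P (fun p => IsStrong G S P p)]
  have hT : ∑ p ∈ P.filter (fun p => IsStrong G S P p),
      ((DD G S).filter fun z => (z.1 = p.1 ∨ z.1 = p.2) ∧ z.2 ∈ uns S P).card ≤
      (TT G S P).card * (uns S P).card := by
    refine le_trans (Finset.sum_le_sum (fun p hp => fiber_toU_strong hP hmax
      (Finset.mem_filter.1 hp).1 (Finset.mem_filter.1 hp).2)) ?_
    rw [Finset.sum_const, smul_eq_mul, TT]
  have hQ : ∑ p ∈ P.filter (fun p => ¬ IsStrong G S P p),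
      ((DD G S).filter fun z => (z.1 = p.1 ∨ z.1 = p.2) ∧ z.2 ∈ uns S P).card ≤
      2 * (QQ G S P).card := by
    refine le_trans (Finset.sum_le_sum (fun p hp => fiber_toU_weak
      (Finset.mem_filter.1 hp).1 (Finset.mem_filter.1 hp).2)) ?_
    rw [Finset.sum_const, smul_eq_mul, QQ, mul_comm]
  omega

lemma fiber_Ufrom_strong (hP : IsMat G S P) (hmax : ∀ Q, IsMat G S Q → Q.card ≤ P.card)
    (hp : p ∈ P) (hs : IsStrong G S P p) :
    ((DD G S).filter fun z => z.1 ∈ uns S P ∧ (z.2 = p.1 ∨ z.2 = p.2)).card ≤ (uns S P).card := by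
  have key : ∀ w ∈ (DD G S).filter fun z => z.1 ∈ uns S P ∧ (z.2 = p.1 ∨ z.2 = p.2),
      w.2 = apex G S P p := by
    intro w hw
    obtain ⟨hwD, hwu, hwo⟩ := Finset.mem_filter.1 hw
    rcases apex_or_base (G := G) (S := S) (P := P) hwo with e | e
    · exact e
    · exfalso
      have : w.1 ∈ att G S P (base G S P p) :=
        mem_att.2 ⟨hwu, by rw [← e]; exact ((mem_DD.1 hwD).2.2).symm⟩
      rw [att_base_empty hP hmax hp hs] at this
      simp at this
  refine Finset.card_le_card_of_injOn (fun z => z.1) (fun z hz => (Finset.mem_filter.1 hz).2.1) ?_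
  intro z hz z' hz' he
  exact Prod.ext he ((key z hz).trans (key z' hz').symm)

lemma fiber_Ufrom_weak (hp : p ∈ P) (hs : ¬ IsStrong G S P p) :
    ((DD G S).filter fun z => z.1 ∈ uns S P ∧ (z.2 = p.1 ∨ z.2 = p.2)).card ≤ 2 := by
  have hc : ∀ x, ¬ (2 ≤ (att G S P x).card) → (att G S P x).card ≤ 1 := fun x h => by omega
  rw [IsStrong, not_or] at hs
  have hsub : ((DD G S).filter fun z => z.1 ∈ uns S P ∧ (z.2 = p.1 ∨ z.2 = p.2)) ⊆
      ((DD G S).filter fun z => z.1 ∈ uns S P ∧ z.2 = p.1) ∪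
      ((DD G S).filter fun z => z.1 ∈ uns S P ∧ z.2 = p.2) := by
    intro z hz
    obtain ⟨hzD, hzu, hzo⟩ := Finset.mem_filter.1 hz
    rcases hzo with e | e
    · exact Finset.mem_union_left _ (Finset.mem_filter.2 ⟨hzD, hzu, e⟩)
    · exact Finset.mem_union_right _ (Finset.mem_filter.2 ⟨hzD, hzu, e⟩)
  have h1 : ∀ (c : V), ((DD G S).filter fun z => z.1 ∈ uns S P ∧ z.2 = c).card ≤ (att G S P c).card := by
    intro c
    refine Finset.card_le_card_of_injOn (fun z => z.1) ?_ ?_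
    · intro z hz
      obtain ⟨hzD, hzu, e⟩ := Finset.mem_filter.1 hz
      exact mem_att.2 ⟨hzu, by rw [← e]; exact ((mem_DD.1 hzD).2.2).symm⟩
    · intro z hz z' hz' he
      exact Prod.ext he (((Finset.mem_filter.1 hz).2.2).trans ((Finset.mem_filter.1 hz').2.2).symm)
  have := h1 p.1
  have := h1 p.2
  have := hc p.1 hs.1
  have := hc p.2 hs.2
  have := Finset.card_union_le ((DD G S).filter fun z => z.1 ∈ uns S P ∧ z.2 = p.1)
    ((DD G S).filter fun z => z.1 ∈ uns S P ∧ z.2 = p.2)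
  have := Finset.card_le_card hsub
  omega

lemma card_B3_le (hP : IsMat G S P) (hmax : ∀ Q, IsMat G S Q → Q.card ≤ P.card) :
    (B3 G S P).card ≤ (TT G S P).card * (uns S P).card + 2 * (QQ G S P).card := by
  refine le_trans Finset.card_biUnion_le ?_
  rw [← Finset.sum_filter_add_sum_filter_not P (fun p => IsStrong G S P p)]
  have hT : ∑ p ∈ P.filter (fun p => IsStrong G S P p),
      ((DD G S).filter fun z => z.1 ∈ uns S P ∧ (z.2 = p.1 ∨ z.2 = p.2)).card ≤
      (TT G S P).card * (uns S P).card := by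
    refine le_trans (Finset.sum_le_sum (fun p hp => fiber_Ufrom_strong hP hmax
      (Finset.mem_filter.1 hp).1 (Finset.mem_filter.1 hp).2)) ?_
    rw [Finset.sum_const, smul_eq_mul, TT]
  have hQ : ∑ p ∈ P.filter (fun p => ¬ IsStrong G S P p),
      ((DD G S).filter fun z => z.1 ∈ uns S P ∧ (z.2 = p.1 ∨ z.2 = p.2)).card ≤
      2 * (QQ G S P).card := by
    refine le_trans (Finset.sum_le_sum (fun p hp => fiber_Ufrom_weak
      (Finset.mem_filter.1 hp).1 (Finset.mem_filter.1 hp).2)) ?_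
    rw [Finset.sum_const, smul_eq_mul, QQ, mul_comm]
  omega

lemma mem_TT_P {p : V × V} (h : p ∈ TT G S P) : p ∈ P := (Finset.mem_filter.1 h).1
lemma mem_TT_strong {p : V × V} (h : p ∈ TT G S P) : IsStrong G S P p := (Finset.mem_filter.1 h).2
lemma mem_QQ_P {p : V × V} (h : p ∈ QQ G S P) : p ∈ P := (Finset.mem_filter.1 h).1
lemma mem_QQ_ns {p : V × V} (h : p ∈ QQ G S P) : ¬ IsStrong G S P p := (Finset.mem_filter.1 h).2

lemma QQ_ne_TT {l p : V × V} (hl : l ∈ QQ G S P) (hp : p ∈ TT G S P) : l ≠ p := by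
  intro h
  exact mem_QQ_ns hl (h ▸ mem_TT_strong hp)

lemma card_B4ss_le (hP : IsMat G S P) (hmax : ∀ Q, IsMat G S Q → Q.card ≤ P.card) :
    (B4ss G S P).card ≤ 3 * ((TT G S P).card * (TT G S P).card - (TT G S P).card) := by
  refine le_trans Finset.card_biUnion_le ?_
  refine le_trans (Finset.sum_le_sum (g := fun _ => 3) (fun pq hpq => ?_)) ?_
  · obtain ⟨hp, hq, hpqne⟩ := Finset.mem_offDiag.1 hpq
    set p := pq.1
    set q := pq.2
    have hsub : ((DD G S).filter fun z => (z.1 = p.1 ∨ z.1 = p.2) ∧ (z.2 = q.1 ∨ z.2 = q.2)) ⊆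
        ({(apex G S P p, apex G S P q), (apex G S P p, base G S P q),
          (base G S P p, apex G S P q)} : Finset (V × V)) := by
      intro z hz
      obtain ⟨hzD, hzo1, hzo2⟩ := Finset.mem_filter.1 hz
      rcases apex_or_base (G := G) (S := S) (P := P) hzo1 with e1 | e1 <;>
        rcases apex_or_base (G := G) (S := S) (P := P) hzo2 with e2 | e2
      · simp only [Finset.mem_insert, Finset.mem_singleton]
        exact Or.inl (Prod.ext e1 e2)
      · simp only [Finset.mem_insert, Finset.mem_singleton]
        exact Or.inr (Or.inl (Prod.ext e1 e2))
      · simp only [Finset.mem_insert, Finset.mem_singleton]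
        exact Or.inr (Or.inr (Prod.ext e1 e2))
      · exfalso
        refine no_bb hP hmax (mem_TT_P hp) (mem_TT_P hq) hpqne
          (mem_TT_strong hp) (mem_TT_strong hq) ?_
        rw [← e1, ← e2]
        exact (mem_DD.1 hzD).2.2
    refine le_trans (Finset.card_le_card hsub) ?_
    refine le_trans (Finset.card_insert_le _ _) ?_
    refine Nat.succ_le_succ ?_
    exact le_trans (Finset.card_insert_le _ _) (by simp)
  · rw [Finset.sum_const, smul_eq_mul, Finset.offDiag_card, mul_comm]

lemma card_B4nn_le : (B4nn G S P).card ≤ 4 * ((QQ G S P).card * (QQ G S P).card - (QQ G S P).card) := by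
  refine le_trans Finset.card_biUnion_le ?_
  refine le_trans (Finset.sum_le_sum (g := fun _ => 4) (fun pq hpq => ?_)) ?_
  · have hsub : ((DD G S).filter fun z => (z.1 = pq.1.1 ∨ z.1 = pq.1.2) ∧ (z.2 = pq.2.1 ∨ z.2 = pq.2.2)) ⊆
        ({(pq.1.1, pq.2.1), (pq.1.1, pq.2.2), (pq.1.2, pq.2.1), (pq.1.2, pq.2.2)} : Finset (V × V)) := by
      intro z hz
      obtain ⟨hzD, hzo1, hzo2⟩ := Finset.mem_filter.1 hz
      simp only [Finset.mem_insert, Finset.mem_singleton]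
      rcases hzo1 with e1 | e1 <;> rcases hzo2 with e2 | e2
      · exact Or.inl (Prod.ext e1 e2)
      · exact Or.inr (Or.inl (Prod.ext e1 e2))
      · exact Or.inr (Or.inr (Or.inl (Prod.ext e1 e2)))
      · exact Or.inr (Or.inr (Or.inr (Prod.ext e1 e2)))
    refine le_trans (Finset.card_le_card hsub) ?_
    refine le_trans (Finset.card_insert_le _ _) (Nat.succ_le_succ ?_)
    refine le_trans (Finset.card_insert_le _ _) (Nat.succ_le_succ ?_)
    exact le_trans (Finset.card_insert_le _ _) (by simp)
  · rw [Finset.sum_const, smul_eq_mul, Finset.offDiag_card, mul_comm]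

lemma card_B4sna_le : (B4sna G S P).card ≤ 2 * ((TT G S P).card * (QQ G S P).card) := by
  refine le_trans Finset.card_biUnion_le ?_
  refine le_trans (Finset.sum_le_sum (g := fun _ => 2) (fun pq hpq => ?_)) ?_
  · have hsub : ((DD G S).filter fun z => z.1 = apex G S P pq.1 ∧ (z.2 = pq.2.1 ∨ z.2 = pq.2.2)) ⊆
        ({(apex G S P pq.1, pq.2.1), (apex G S P pq.1, pq.2.2)} : Finset (V × V)) := by
      intro z hz
      obtain ⟨hzD, e1, hzo2⟩ := Finset.mem_filter.1 hz
      simp only [Finset.mem_insert, Finset.mem_singleton]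
      rcases hzo2 with e2 | e2
      · exact Or.inl (Prod.ext e1 e2)
      · exact Or.inr (Prod.ext e1 e2)
    refine le_trans (Finset.card_le_card hsub) ?_
    exact le_trans (Finset.card_insert_le _ _) (by simp)
  · rw [Finset.sum_const, smul_eq_mul, Finset.card_product, mul_comm]

lemma card_B4nsa_le : (B4nsa G S P).card ≤ 2 * ((TT G S P).card * (QQ G S P).card) := by
  refine le_trans Finset.card_biUnion_le ?_
  refine le_trans (Finset.sum_le_sum (g := fun _ => 2) (fun pq hpq => ?_)) ?_
  · have hsub : ((DD G S).filter fun z => (z.1 = pq.2.1 ∨ z.1 = pq.2.2) ∧ z.2 = apex G S P pq.1) ⊆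
        ({(pq.2.1, apex G S P pq.1), (pq.2.2, apex G S P pq.1)} : Finset (V × V)) := by
      intro z hz
      obtain ⟨hzD, hzo1, e2⟩ := Finset.mem_filter.1 hz
      simp only [Finset.mem_insert, Finset.mem_singleton]
      rcases hzo1 with e1 | e1
      · exact Or.inl (Prod.ext e1 e2)
      · exact Or.inr (Prod.ext e1 e2)
    refine le_trans (Finset.card_le_card hsub) ?_
    exact le_trans (Finset.card_insert_le _ _) (by simp)
  · rw [Finset.sum_const, smul_eq_mul, Finset.card_product, mul_comm]

lemma fiber_snb (hP : IsMat G S P) (hmax : ∀ Q, IsMat G S Q → Q.card ≤ P.card)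
    {l : V × V} (hl : l ∈ QQ G S P) :
    ((DD G S).filter fun z => (∃ p ∈ TT G S P, z.1 = base G S P p) ∧ (z.2 = l.1 ∨ z.2 = l.2)).card ≤
      (TT G S P).card + 2 := by
  set F1 := (DD G S).filter fun z => (∃ p ∈ TT G S P, z.1 = base G S P p) ∧ z.2 = l.1 with hF1
  set F2 := (DD G S).filter fun z => (∃ p ∈ TT G S P, z.1 = base G S P p) ∧ z.2 = l.2 with hF2
  have hsub : ((DD G S).filter fun z => (∃ p ∈ TT G S P, z.1 = base G S P p) ∧ (z.2 = l.1 ∨ z.2 = l.2)) ⊆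
      F1 ∪ F2 := by
    intro z hz
    obtain ⟨hzD, hex, hzo⟩ := Finset.mem_filter.1 hz
    rcases hzo with e | e
    · exact Finset.mem_union_left _ (Finset.mem_filter.2 ⟨hzD, hex, e⟩)
    · exact Finset.mem_union_right _ (Finset.mem_filter.2 ⟨hzD, hex, e⟩)
  have ht1 : F1.card ≤ (TT G S P).card := by
    refine le_trans (Finset.card_le_card_of_injOn (fun z => z.1) ?_ ?_)
      (Finset.card_image_le (f := fun p => base G S P p) (s := TT G S P))
    · intro z hz
      obtain ⟨hzD, ⟨p, hpT, e⟩, e2⟩ := Finset.mem_filter.1 hz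
      exact Finset.mem_image.2 ⟨p, hpT, e.symm⟩
    · intro z hz z' hz' he
      exact Prod.ext he
        (((Finset.mem_filter.1 hz).2.2).trans ((Finset.mem_filter.1 hz').2.2).symm)
  have ht2 : F2.card ≤ (TT G S P).card := by
    refine le_trans (Finset.card_le_card_of_injOn (fun z => z.1) ?_ ?_)
      (Finset.card_image_le (f := fun p => base G S P p) (s := TT G S P))
    · intro z hz
      obtain ⟨hzD, ⟨p, hpT, e⟩, e2⟩ := Finset.mem_filter.1 hz
      exact Finset.mem_image.2 ⟨p, hpT, e.symm⟩
    · intro z hz z' hz' he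
      exact Prod.ext he
        (((Finset.mem_filter.1 hz).2.2).trans ((Finset.mem_filter.1 hz').2.2).symm)
  have hboth : F1.Nonempty → F2.Nonempty → F1.card ≤ 1 ∧ F2.card ≤ 1 := by
    rintro ⟨w1, hw1⟩ ⟨w2, hw2⟩
    obtain ⟨hw1D, ⟨p1, hp1T, e1⟩, f1⟩ := Finset.mem_filter.1 hw1
    obtain ⟨hw2D, ⟨p2, hp2T, e2⟩, f2⟩ := Finset.mem_filter.1 hw2
    have adj1 : G.Adj (base G S P p1) l.1 := by
      rw [← e1, ← f1]; exact (mem_DD.1 hw1D).2.2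
    have adj2 : G.Adj (base G S P p2) l.2 := by
      rw [← e2, ← f2]; exact (mem_DD.1 hw2D).2.2
    have key1 : ∀ z ∈ F1, ∀ pz, pz ∈ TT G S P → z.1 = base G S P pz → pz = p2 := by
      intro z hz pz hzT ez
      by_contra hne
      obtain ⟨hzD, -, fz⟩ := Finset.mem_filter.1 hz
      have adjz : G.Adj (base G S P pz) l.1 := by
        rw [← ez, ← fz]; exact (mem_DD.1 hzD).2.2
      exact no_bxyb hP hmax (mem_TT_P hzT) (mem_TT_P hp2T) (mem_QQ_P hl) hne
        (QQ_ne_TT hl hzT) (QQ_ne_TT hl hp2T) (mem_TT_strong hzT) (mem_TT_strong hp2T)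
        (Or.inl ⟨rfl, rfl⟩) adjz adj2.symm
    have key2 : ∀ z ∈ F2, ∀ pz, pz ∈ TT G S P → z.1 = base G S P pz → pz = p1 := by
      intro z hz pz hzT ez
      by_contra hne
      obtain ⟨hzD, -, fz⟩ := Finset.mem_filter.1 hz
      have adjz : G.Adj (base G S P pz) l.2 := by
        rw [← ez, ← fz]; exact (mem_DD.1 hzD).2.2
      exact no_bxyb hP hmax (mem_TT_P hp1T) (mem_TT_P hzT) (mem_QQ_P hl)
        (fun h => hne h.symm)
        (QQ_ne_TT hl hp1T) (QQ_ne_TT hl hzT) (mem_TT_strong hp1T) (mem_TT_strong hzT)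
        (Or.inl ⟨rfl, rfl⟩) adj1 adjz.symm
    constructor
    · refine Finset.card_le_one.2 (fun z hz z' hz' => ?_)
      obtain ⟨-, ⟨pz, hzT, ez⟩, fz⟩ := Finset.mem_filter.1 hz
      obtain ⟨-, ⟨pz', hzT', ez'⟩, fz'⟩ := Finset.mem_filter.1 hz'
      have : pz = p2 := key1 z hz pz hzT ez
      have e' : pz' = p2 := key1 z' hz' pz' hzT' ez'
      refine Prod.ext ?_ (fz.trans fz'.symm)
      rw [ez, ez', this, e']
    · refine Finset.card_le_one.2 (fun z hz z' hz' => ?_)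
      obtain ⟨-, ⟨pz, hzT, ez⟩, fz⟩ := Finset.mem_filter.1 hz
      obtain ⟨-, ⟨pz', hzT', ez'⟩, fz'⟩ := Finset.mem_filter.1 hz'
      have : pz = p1 := key2 z hz pz hzT ez
      have e' : pz' = p1 := key2 z' hz' pz' hzT' ez'
      refine Prod.ext ?_ (fz.trans fz'.symm)
      rw [ez, ez', this, e']
  have hu := Finset.card_union_le F1 F2
  have hc := Finset.card_le_card hsub
  rcases Finset.eq_empty_or_nonempty F1 with h1 | h1
  · rw [h1] at hc hu
    simp only [Finset.card_empty] at hu ⊢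
    omega
  · rcases Finset.eq_empty_or_nonempty F2 with h2 | h2
    · rw [h2] at hc hu
      simp only [Finset.card_empty] at hu ⊢
      omega
    · obtain ⟨c1, c2⟩ := hboth h1 h2
      omega

lemma card_B4snb_le (hP : IsMat G S P) (hmax : ∀ Q, IsMat G S Q → Q.card ≤ P.card) :
    (B4snb G S P).card ≤ (QQ G S P).card * ((TT G S P).card + 2) := by
  refine le_trans Finset.card_biUnion_le ?_
  refine le_trans (Finset.sum_le_sum (g := fun _ => (TT G S P).card + 2)
    (fun l hl => fiber_snb hP hmax hl)) ?_
  rw [Finset.sum_const, smul_eq_mul]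

lemma fiber_nsb (hP : IsMat G S P) (hmax : ∀ Q, IsMat G S Q → Q.card ≤ P.card)
    {l : V × V} (hl : l ∈ QQ G S P) :
    ((DD G S).filter fun z => (z.1 = l.1 ∨ z.1 = l.2) ∧ (∃ p ∈ TT G S P, z.2 = base G S P p)).card ≤
      (TT G S P).card + 2 := by
  set F1 := (DD G S).filter fun z => z.1 = l.1 ∧ (∃ p ∈ TT G S P, z.2 = base G S P p) with hF1
  set F2 := (DD G S).filter fun z => z.1 = l.2 ∧ (∃ p ∈ TT G S P, z.2 = base G S P p) with hF2
  have hsub : ((DD G S).filter fun z => (z.1 = l.1 ∨ z.1 = l.2) ∧ (∃ p ∈ TT G S P, z.2 = base G S P p)) ⊆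
      F1 ∪ F2 := by
    intro z hz
    obtain ⟨hzD, hzo, hex⟩ := Finset.mem_filter.1 hz
    rcases hzo with e | e
    · exact Finset.mem_union_left _ (Finset.mem_filter.2 ⟨hzD, e, hex⟩)
    · exact Finset.mem_union_right _ (Finset.mem_filter.2 ⟨hzD, e, hex⟩)
  have ht1 : F1.card ≤ (TT G S P).card := by
    refine le_trans (Finset.card_le_card_of_injOn (fun z => z.2) ?_ ?_)
      (Finset.card_image_le (f := fun p => base G S P p) (s := TT G S P))
    · intro z hz
      obtain ⟨hzD, e1, ⟨p, hpT, e⟩⟩ := Finset.mem_filter.1 hz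
      exact Finset.mem_image.2 ⟨p, hpT, e.symm⟩
    · intro z hz z' hz' he
      exact Prod.ext
        (((Finset.mem_filter.1 hz).2.1).trans ((Finset.mem_filter.1 hz').2.1).symm) he
  have ht2 : F2.card ≤ (TT G S P).card := by
    refine le_trans (Finset.card_le_card_of_injOn (fun z => z.2) ?_ ?_)
      (Finset.card_image_le (f := fun p => base G S P p) (s := TT G S P))
    · intro z hz
      obtain ⟨hzD, e1, ⟨p, hpT, e⟩⟩ := Finset.mem_filter.1 hz
      exact Finset.mem_image.2 ⟨p, hpT, e.symm⟩
    · intro z hz z' hz' he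
      exact Prod.ext
        (((Finset.mem_filter.1 hz).2.1).trans ((Finset.mem_filter.1 hz').2.1).symm) he
  have hboth : F1.Nonempty → F2.Nonempty → F1.card ≤ 1 ∧ F2.card ≤ 1 := by
    rintro ⟨w1, hw1⟩ ⟨w2, hw2⟩
    obtain ⟨hw1D, f1, ⟨p1, hp1T, e1⟩⟩ := Finset.mem_filter.1 hw1
    obtain ⟨hw2D, f2, ⟨p2, hp2T, e2⟩⟩ := Finset.mem_filter.1 hw2
    have adj1 : G.Adj (base G S P p1) l.1 := by
      rw [← e1, ← f1]; exact ((mem_DD.1 hw1D).2.2).symm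
    have adj2 : G.Adj (base G S P p2) l.2 := by
      rw [← e2, ← f2]; exact ((mem_DD.1 hw2D).2.2).symm
    have key1 : ∀ z ∈ F1, ∀ pz, pz ∈ TT G S P → z.2 = base G S P pz → pz = p2 := by
      intro z hz pz hzT ez
      by_contra hne
      obtain ⟨hzD, fz, -⟩ := Finset.mem_filter.1 hz
      have adjz : G.Adj (base G S P pz) l.1 := by
        rw [← ez, ← fz]; exact ((mem_DD.1 hzD).2.2).symm
      exact no_bxyb hP hmax (mem_TT_P hzT) (mem_TT_P hp2T) (mem_QQ_P hl) hne
        (QQ_ne_TT hl hzT) (QQ_ne_TT hl hp2T) (mem_TT_strong hzT) (mem_TT_strong hp2T)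
        (Or.inl ⟨rfl, rfl⟩) adjz adj2.symm
    have key2 : ∀ z ∈ F2, ∀ pz, pz ∈ TT G S P → z.2 = base G S P pz → pz = p1 := by
      intro z hz pz hzT ez
      by_contra hne
      obtain ⟨hzD, fz, -⟩ := Finset.mem_filter.1 hz
      have adjz : G.Adj (base G S P pz) l.2 := by
        rw [← ez, ← fz]; exact ((mem_DD.1 hzD).2.2).symm
      exact no_bxyb hP hmax (mem_TT_P hp1T) (mem_TT_P hzT) (mem_QQ_P hl)
        (fun h => hne h.symm)
        (QQ_ne_TT hl hp1T) (QQ_ne_TT hl hzT) (mem_TT_strong hp1T) (mem_TT_strong hzT)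
        (Or.inl ⟨rfl, rfl⟩) adj1 adjz.symm
    constructor
    · refine Finset.card_le_one.2 (fun z hz z' hz' => ?_)
      obtain ⟨-, fz, ⟨pz, hzT, ez⟩⟩ := Finset.mem_filter.1 hz
      obtain ⟨-, fz', ⟨pz', hzT', ez'⟩⟩ := Finset.mem_filter.1 hz'
      have h1 : pz = p2 := key1 z hz pz hzT ez
      have h2 : pz' = p2 := key1 z' hz' pz' hzT' ez'
      refine Prod.ext (fz.trans fz'.symm) ?_
      rw [ez, ez', h1, h2]
    · refine Finset.card_le_one.2 (fun z hz z' hz' => ?_)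
      obtain ⟨-, fz, ⟨pz, hzT, ez⟩⟩ := Finset.mem_filter.1 hz
      obtain ⟨-, fz', ⟨pz', hzT', ez'⟩⟩ := Finset.mem_filter.1 hz'
      have h1 : pz = p1 := key2 z hz pz hzT ez
      have h2 : pz' = p1 := key2 z' hz' pz' hzT' ez'
      refine Prod.ext (fz.trans fz'.symm) ?_
      rw [ez, ez', h1, h2]
  have hu := Finset.card_union_le F1 F2
  have hc := Finset.card_le_card hsub
  rcases Finset.eq_empty_or_nonempty F1 with h1 | h1
  · rw [h1] at hc hu
    simp only [Finset.card_empty] at hu ⊢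
    omega
  · rcases Finset.eq_empty_or_nonempty F2 with h2 | h2
    · rw [h2] at hc hu
      simp only [Finset.card_empty] at hu ⊢
      omega
    · obtain ⟨c1, c2⟩ := hboth h1 h2
      omega

lemma card_B4nsb_le (hP : IsMat G S P) (hmax : ∀ Q, IsMat G S Q → Q.card ≤ P.card) :
    (B4nsb G S P).card ≤ (QQ G S P).card * ((TT G S P).card + 2) := by
  refine le_trans Finset.card_biUnion_le ?_
  refine le_trans (Finset.sum_le_sum (g := fun _ => (TT G S P).card + 2)
    (fun l hl => fiber_nsb hP hmax hl)) ?_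
  rw [Finset.sum_const, smul_eq_mul]

lemma card_pairSet (hP : IsMat G S P) : (pairSet P).card = 2 * P.card := by
  rw [pairSet, Finset.card_biUnion]
  · have : ∀ p ∈ P, ({p.1, p.2} : Finset V).card = 2 := fun p hp => by
      rw [Finset.card_insert_of_notMem (by simpa using pfst_ne_psnd hP hp), Finset.card_singleton]
    rw [Finset.sum_congr rfl this, Finset.sum_const, smul_eq_mul, mul_comm]
  · intro p hp q hq hpq
    rw [Function.onFun, Finset.disjoint_left]
    intro x hx hx'
    simp only [Finset.mem_insert, Finset.mem_singleton] at hx hx'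
    exact pair_ne_pair hP hp hq hpq hx hx' rfl

lemma pairSet_subset (hP : IsMat G S P) : pairSet P ⊆ S := by
  intro x hx
  obtain ⟨p, hp, ho⟩ := mem_pairSet.1 hx
  exact pair_mem_S hP hp ho

lemma card_uns (hP : IsMat G S P) :
    (uns S P).card = S.card - 2 * P.card ∧ 2 * P.card ≤ S.card := by
  have h1 := Finset.card_sdiff_of_subset (pairSet_subset hP)
  have h2 := Finset.card_le_card (pairSet_subset hP)
  rw [card_pairSet hP] at h1 h2
  exact ⟨h1, h2⟩

lemma TT_add_QQ : (TT G S P).card + (QQ G S P).card = P.card :=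
  Finset.card_filter_add_card_filter_not _

lemma DD_card_le (hP : IsMat G S P) (hmax : ∀ Q, IsMat G S Q → Q.card ≤ P.card) :
    (DD G S).card ≤ 2 * P.card
      + 2 * ((TT G S P).card * (uns S P).card + 2 * (QQ G S P).card)
      + 3 * ((TT G S P).card * (TT G S P).card - (TT G S P).card)
      + 4 * ((QQ G S P).card * (QQ G S P).card - (QQ G S P).card)
      + 4 * ((TT G S P).card * (QQ G S P).card)
      + 2 * ((QQ G S P).card * ((TT G S P).card + 2)) := by
  have h0 := Finset.card_le_card (cover hP hmax)
  have u1 := Finset.card_union_le (B1 P ∪ B2 G S P ∪ B3 G S P ∪ B4ss G S P ∪ B4nn G S P ∪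
      B4sna G S P ∪ B4snb G S P ∪ B4nsa G S P) (B4nsb G S P)
  have u2 := Finset.card_union_le (B1 P ∪ B2 G S P ∪ B3 G S P ∪ B4ss G S P ∪ B4nn G S P ∪
      B4sna G S P ∪ B4snb G S P) (B4nsa G S P)
  have u3 := Finset.card_union_le (B1 P ∪ B2 G S P ∪ B3 G S P ∪ B4ss G S P ∪ B4nn G S P ∪
      B4sna G S P) (B4snb G S P)
  have u4 := Finset.card_union_le (B1 P ∪ B2 G S P ∪ B3 G S P ∪ B4ss G S P ∪ B4nn G S P)
      (B4sna G S P)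
  have u5 := Finset.card_union_le (B1 P ∪ B2 G S P ∪ B3 G S P ∪ B4ss G S P) (B4nn G S P)
  have u6 := Finset.card_union_le (B1 P ∪ B2 G S P ∪ B3 G S P) (B4ss G S P)
  have u7 := Finset.card_union_le (B1 P ∪ B2 G S P) (B3 G S P)
  have u8 := Finset.card_union_le (B1 P) (B2 G S P)
  have b1 := card_B1_le (P := P)
  have b2 := card_B2_le hP hmax
  have b3 := card_B3_le hP hmax
  have b4 := card_B4ss_le hP hmax
  have b5 := card_B4nn_le (G := G) (S := S) (P := P)
  have b6 := card_B4sna_le (G := G) (S := S) (P := P)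
  have b7 := card_B4snb_le hP hmax
  have b8 := card_B4nsa_le (G := G) (S := S) (P := P)
  have b9 := card_B4nsb_le hP hmax
  omega

lemma exists_mat_of_dense {k M : ℕ} {β s : ℝ} (hs : 3/5 ≤ s) (hs1 : s ≤ 1)
    (hβ : β = 1 - s^2) (hSk : S.card = k)
    (hcov : β * ((k : ℝ) * ((k : ℝ) - 1)) ≤ ((DD G S).card : ℝ))
    (hM : (M : ℝ) ≤ (1 - s) * k) :
    ∃ P, IsMat G S P ∧ P.card = M := by
  obtain ⟨P, hP, hmax⟩ := exists_max_mat G S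
  rcases le_or_gt M P.card with h | h
  · obtain ⟨Q, hQsub, hQcard⟩ := Finset.exists_subset_card_eq h
    exact ⟨Q, isMat_subset G S hP hQsub, hQcard⟩
  · exfalso
    have hnat : P.card + 1 ≤ M := h
    have htq : (TT G S P).card + (QQ G S P).card = P.card := TT_add_QQ
    obtain ⟨huc, hvk⟩ := card_uns hP
    have hDD := DD_card_le hP hmax
    set t := (TT G S P).card with hts
    set qn := (QQ G S P).card with hqs
    have htt : t ≤ t * t := by nlinarith
    have hqq : qn ≤ qn * qn := by nlinarith
    have hPc : ((P.card : ℕ) : ℝ) = (t : ℝ) + (qn : ℝ) := by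
      rw [← htq]; push_cast; ring
    have huR : (((uns S P).card : ℕ) : ℝ) = (k : ℝ) - 2 * ((t : ℝ) + (qn : ℝ)) := by
      rw [huc, hSk] at *
      rw [Nat.cast_sub (by rw [← hSk]; exact hvk)]
      push_cast [← hPc]
      ring
    have hcast : ((DD G S).card : ℝ) ≤ 2 * ((t : ℝ) + (qn : ℝ))
        + 2 * ((t : ℝ) * ((k : ℝ) - 2 * ((t : ℝ) + (qn : ℝ))) + 2 * (qn : ℝ))
        + (3 * ((t : ℝ) * (t : ℝ)) - 3 * (t : ℝ)) + (4 * ((qn : ℝ) * (qn : ℝ)) - 4 * (qn : ℝ))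
        + 4 * ((t : ℝ) * (qn : ℝ)) + 2 * ((qn : ℝ) * ((t : ℝ) + 2)) := by
      have hc := (Nat.cast_le (α := ℝ)).2 hDD
      push_cast [Nat.cast_sub htt, Nat.cast_sub hqq] at hc
      rw [huR, hPc] at hc
      linarith
    have hvc : (t : ℝ) + (qn : ℝ) + 1 ≤ (1 - s) * (k : ℝ) := by
      have h1 : ((P.card : ℕ) : ℝ) + 1 ≤ (M : ℝ) := by
        exact_mod_cast hnat
      rw [hPc] at h1
      linarith
    have harith := arith_main (t := (t : ℝ)) (q := (qn : ℝ))
      (Nat.cast_nonneg t) (Nat.cast_nonneg qn) hs hs1 hvc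
    rw [← hβ] at harith
    linarith

lemma DD_card_eq (G : SimpleGraph V) [DecidableRel G.Adj] [Fintype V] (S : Finset V) :
    (DD G S).card = 2 * (G.induce (S : Set V)).edgeSet.ncard := by
  classical
  letI : DecidableRel (G.induce (S : Set V)).Adj := fun a b => by
    simp only [SimpleGraph.comap_adj]; infer_instance
  have h1 : (G.induce (S : Set V)).edgeSet.ncard = (G.induce (S : Set V)).edgeFinset.card := by
    rw [← SimpleGraph.coe_edgeFinset, Set.ncard_coe_finset]
  rw [h1, ← SimpleGraph.dart_card_eq_twice_card_edges, ← Finset.card_univ]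
  refine (Finset.card_bij (fun d _ => ((d.toProd.1 : V), (d.toProd.2 : V))) ?_ ?_ ?_).symm
  · intro d _
    refine mem_DD.2 ⟨?_, ?_, ?_⟩
    · exact d.toProd.1.2
    · exact d.toProd.2.2
    · exact d.adj
  · intro d1 _ d2 _ he
    refine SimpleGraph.Dart.ext d1 d2 ?_
    have h1 := congrArg Prod.fst he
    have h2 := congrArg Prod.snd he
    exact Prod.ext (Subtype.ext h1) (Subtype.ext h2)
  · intro z hz
    obtain ⟨h1, h2, hadj⟩ := mem_DD.1 hz
    exact ⟨SimpleGraph.Dart.mk (⟨z.1, h1⟩, ⟨z.2, h2⟩) hadj, Finset.mem_univ _, rfl⟩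

lemma pairSet_recover [Fintype V] (P : Finset (V × V)) :
    pairSet P = (P.image fun p => s(p.1, p.2)).biUnion
      (fun e => Finset.univ.filter (fun x => x ∈ e)) := by
  ext x
  simp only [mem_pairSet, Finset.mem_biUnion, Finset.mem_image, Finset.mem_filter,
    Finset.mem_univ, true_and]
  constructor
  · rintro ⟨p, hp, h⟩
    refine ⟨s(p.1, p.2), ⟨p, hp, rfl⟩, ?_⟩
    rw [Sym2.mem_iff]
    exact h
  · rintro ⟨e, ⟨p, hp, rfl⟩, hx⟩
    rw [Sym2.mem_iff] at hx
    exact ⟨p, hp, hx⟩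

end BetaCov

open BetaCov in
/-- For a graph `G` on `n ≥ 1` vertices with `m ≥ 1` edges and `β ≤ 16/25`, the number
of `k`-subsets `S` whose induced subgraph has at least `β * C(k,2)` edges is at most
`m ^ ((1-√(1-β))k + 1) * n ^ ((2√(1-β) - 1)k + 2)`. -/
theorem count_beta_covered_small {V : Type} [Fintype V] (n m k : ℕ) (β : ℝ)
    (hβ0 : 0 ≤ β) (hβ1 : β ≤ 16 / 25) (hm : 1 ≤ m) (hn : 1 ≤ n) (hk : 1 ≤ k)
    (G : SimpleGraph V) (hcard : Fintype.card V = n) (hedges : G.edgeSet.ncard = m) :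
    (({S : Finset V | S.card = k ∧
          β * (k.choose 2 : ℕ) ≤ ((G.induce (S : Set V)).edgeSet.ncard : ℝ)}.ncard : ℕ) : ℝ)
      ≤ (m : ℝ) ^ ((1 - Real.sqrt (1 - β)) * k + 1)
          * (n : ℝ) ^ ((2 * Real.sqrt (1 - β) - 1) * k + 2) := by
  classical
  letI : DecidableEq V := Classical.decEq V
  letI : DecidableRel G.Adj := fun a b => Classical.propDecidable _
  set s : ℝ := Real.sqrt (1 - β) with hsdef
  have h1β : (0:ℝ) ≤ 1 - β := by linarith
  have hs1 : s ≤ 1 := Real.sqrt_le_one.2 (by linarith)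
  have hs35 : 3/5 ≤ s := by
    rw [hsdef, show (3/5 : ℝ) = Real.sqrt (9/25) by
      rw [show (9/25:ℝ) = (3/5)^2 by norm_num, Real.sqrt_sq (by norm_num)]]
    exact Real.sqrt_le_sqrt (by linarith)
  have hs0 : (0:ℝ) ≤ s := Real.sqrt_nonneg _
  have hβeq : β = 1 - s^2 := by rw [hsdef, Real.sq_sqrt h1β]; ring
  set c : ℝ := (1 - s) * k with hcdef
  have hc0 : 0 ≤ c := mul_nonneg (by linarith) (Nat.cast_nonneg k)
  set M : ℕ := ⌈c⌉₊ - 1 with hMdef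
  have hM_le : (M : ℝ) ≤ c := by
    rcases Nat.eq_zero_or_pos ⌈c⌉₊ with h0 | h0
    · rw [hMdef, h0]
      simpa using hc0
    · have h1 : (⌈c⌉₊ : ℝ) < c + 1 := Nat.ceil_lt_add_one hc0
      have hMc : (M:ℝ) = (⌈c⌉₊ : ℝ) - 1 := by
        rw [hMdef, Nat.cast_sub h0]; simp
      linarith
  have hM_ge : c - 1 ≤ (M : ℝ) := by
    rcases Nat.eq_zero_or_pos ⌈c⌉₊ with h0 | h0
    · have hcle : c ≤ 0 := Nat.ceil_eq_zero.1 h0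
      rw [hMdef, h0]
      simp only [Nat.zero_sub, Nat.cast_zero]
      linarith
    · have h2 : c ≤ (⌈c⌉₊ : ℝ) := Nat.le_ceil c
      have hMc : (M:ℝ) = (⌈c⌉₊ : ℝ) - 1 := by
        rw [hMdef, Nat.cast_sub h0]; simp
      linarith
  have hckk : c ≤ 2/5 * k := by
    rw [hcdef]
    exact mul_le_mul_of_nonneg_right (by linarith) (Nat.cast_nonneg k)
  have h2M : 2 * M ≤ k := by
    have h1 : 2*(M:ℝ) ≤ (k:ℝ) := by
      nlinarith [Nat.cast_nonneg (α := ℝ) k]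
    exact_mod_cast h1
  have hfin : ({S : Finset V | S.card = k ∧
      β * (k.choose 2 : ℕ) ≤ ((G.induce (S : Set V)).edgeSet.ncard : ℝ)}).Finite :=
    Set.toFinite _
  rw [Set.ncard_eq_toFinset_card _ hfin]
  set CF := hfin.toFinset with hCF
  have hmatch : ∀ S ∈ CF, ∃ P, IsMat G S P ∧ P.card = M := by
    intro S hS
    rw [hCF, Set.Finite.mem_toFinset] at hS
    obtain ⟨hSk, hScov⟩ := hS
    refine exists_mat_of_dense (M := M) hs35 hs1 hβeq hSk ?_ (by rw [← hcdef]; exact hM_le)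
    have hDD := DD_card_eq G S
    have hcast : ((DD G S).card : ℝ) = 2 * ((G.induce (S:Set V)).edgeSet.ncard : ℝ) := by
      exact_mod_cast congrArg (Nat.cast (R := ℝ)) hDD
    have hch : ((k.choose 2 : ℕ) : ℝ) = (k:ℝ) * ((k:ℝ) - 1) / 2 := Nat.cast_choose_two ℝ k
    rw [hch] at hScov
    rw [hcast]
    linarith
  set pick : Finset V → Finset (V × V) := fun S =>
    if h : ∃ P, IsMat G S P ∧ P.card = M then h.choose else ∅ with hpickdef
  have hpick : ∀ S ∈ CF, IsMat G S (pick S) ∧ (pick S).card = M := by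
    intro S hS
    have h := hmatch S hS
    rw [hpickdef]
    simp only
    rw [dif_pos h]
    exact h.choose_spec
  have hef : G.edgeFinset.card = m := by
    rw [← Set.ncard_coe_finset, SimpleGraph.coe_edgeFinset]
    exact hedges
  have hinj : CF.card ≤
      ((G.edgeFinset.powersetCard M) ×ˢ ((Finset.univ : Finset V).powersetCard (k - 2*M))).card := by
    refine Finset.card_le_card_of_injOn
      (fun S => ((pick S).image (fun p => s(p.1, p.2)), S \ pairSet (pick S))) ?_ ?_
    · intro S hS
      obtain ⟨hPm, hPc⟩ := hpick S hS
      have hSk : S.card = k := by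
        rw [hCF, Finset.mem_coe, Set.Finite.mem_toFinset] at hS
        exact hS.1
      refine Finset.mem_product.2 ⟨?_, ?_⟩
      · refine Finset.mem_powersetCard.2 ⟨?_, ?_⟩
        · intro e he
          obtain ⟨p, hp, rfl⟩ := Finset.mem_image.1 he
          rw [SimpleGraph.mem_edgeFinset, SimpleGraph.mem_edgeSet]
          exact (hPm.1 p hp).1
        · rw [Finset.card_image_of_injOn, hPc]
          intro p hp p' hp' he
          by_contra hne
          rw [Sym2.eq_iff] at he
          obtain ⟨d1, d2, d3, d4⟩ := hPm.2 p hp p' hp' hne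
          rcases he with ⟨e1, e2⟩ | ⟨e1, e2⟩
          · exact d1 e1
          · exact d2 e1
      · refine Finset.mem_powersetCard.2 ⟨Finset.subset_univ _, ?_⟩
        rw [Finset.card_sdiff_of_subset (pairSet_subset hPm), card_pairSet hPm, hPc, hSk]
    · intro S1 h1 S2 h2 he
      have hm1 := hpick S1 (Finset.mem_coe.1 h1)
      have hm2 := hpick S2 (Finset.mem_coe.1 h2)
      have e1 : (pick S1).image (fun p => s(p.1, p.2)) = (pick S2).image (fun p => s(p.1, p.2)) :=
        congrArg Prod.fst he
      have e2 : S1 \ pairSet (pick S1) = S2 \ pairSet (pick S2) := congrArg Prod.snd he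
      have r1 : pairSet (pick S1) = pairSet (pick S2) := by
        rw [pairSet_recover, pairSet_recover, e1]
      calc S1 = pairSet (pick S1) ∪ (S1 \ pairSet (pick S1)) :=
            (Finset.union_sdiff_of_subset (pairSet_subset hm1.1)).symm
        _ = pairSet (pick S2) ∪ (S2 \ pairSet (pick S2)) := by rw [e2, r1]
        _ = S2 := Finset.union_sdiff_of_subset (pairSet_subset hm2.1)
  have hcount : CF.card ≤ m ^ M * n ^ (k - 2*M) := by
    have h1 : ((G.edgeFinset.powersetCard M) ×ˢ
        ((Finset.univ : Finset V).powersetCard (k - 2*M))).card =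
        m.choose M * n.choose (k - 2*M) := by
      rw [Finset.card_product, Finset.card_powersetCard, Finset.card_powersetCard,
        Finset.card_univ, hef, hcard]
    rw [h1] at hinj
    exact le_trans hinj (Nat.mul_le_mul (Nat.choose_le_pow _ _) (Nat.choose_le_pow _ _))
  have hmR : (1:ℝ) ≤ (m:ℝ) := by exact_mod_cast hm
  have hnR : (1:ℝ) ≤ (n:ℝ) := by exact_mod_cast hn
  have hstep : ((CF.card : ℕ) : ℝ) ≤ (m:ℝ) ^ (M:ℕ) * (n:ℝ) ^ (k - 2*M : ℕ) := by
    exact_mod_cast hcount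
  refine le_trans hstep ?_
  have hmexp : (m:ℝ) ^ (M:ℕ) ≤ (m : ℝ) ^ ((1 - s) * k + 1) := by
    rw [← Real.rpow_natCast (m:ℝ) M]
    exact Real.rpow_le_rpow_of_exponent_le hmR (by rw [← hcdef]; linarith)
  have hnexp : (n:ℝ) ^ (k - 2*M : ℕ) ≤ (n : ℝ) ^ ((2 * s - 1) * k + 2) := by
    rw [← Real.rpow_natCast (n:ℝ) (k - 2*M)]
    refine Real.rpow_le_rpow_of_exponent_le hnR ?_
    have hc2 : ((k - 2*M : ℕ) : ℝ) = (k:ℝ) - 2*(M:ℝ) := by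
      rw [Nat.cast_sub h2M]
      push_cast
      ring
    rw [hc2, hcdef] at *
    nlinarith [hM_ge]
  refine mul_le_mul hmexp hnexp ?_ ?_
  · positivity
  · positivity
end

section
/- In a graph G on n ≥ 1 vertices with m ≥ 1 edges, the number of k-subsets S whose induced subgraph has at least β·C(k,2) edges, where β ≥ 16/25, is at most m^(√β·k/2 + 1) · n^((1−√β)k + 2). -/
set_option linter.unusedSectionVars false
set_option maxHeartbeats 1000000

open Finset

variable {V : Type} [Fintype V] [DecidableEq V]

namespace EGaux

/-- `p` is an (unordered) edge-pair of `G`. -/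
def IsPair (G : SimpleGraph V) (p : Finset V) : Prop :=
  ∃ a b : V, G.Adj a b ∧ p = {a, b}

/-- `F` is a matching: a set of pairwise disjoint edge-pairs. -/
def IsM (G : SimpleGraph V) (F : Finset (Finset V)) : Prop :=
  (∀ p ∈ F, IsPair G p) ∧ (∀ p ∈ F, ∀ q ∈ F, p ≠ q → Disjoint p q)

/-- support of a matching -/
def msupp (F : Finset (Finset V)) : Finset V := F.biUnion id

lemma mem_msupp {F : Finset (Finset V)} {v : V} :
    v ∈ msupp F ↔ ∃ p ∈ F, v ∈ p := by
  simp [msupp]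

lemma IsPair.card_eq {G : SimpleGraph V} {p : Finset V} (h : IsPair G p) : p.card = 2 := by
  obtain ⟨a, b, hab, rfl⟩ := h
  rw [Finset.card_insert_of_notMem (by simp [hab.ne]), Finset.card_singleton]

lemma msupp_card {G : SimpleGraph V} {F : Finset (Finset V)} (h : IsM G F) :
    (msupp F).card = 2 * F.card := by
  classical
  rw [msupp, Finset.card_biUnion]
  · rw [show ∀ (f : Finset V → ℕ), (∑ u ∈ F, f u) = ∑ u ∈ F, f u from fun _ => rfl]
    rw [Finset.sum_congr rfl (fun p hp => show (id p).card = 2 from (h.1 p hp).card_eq)]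
    simp [Finset.sum_const, mul_comm]
  · exact fun p hp q hq hpq => h.2 p hp q hq hpq

lemma partner_unique {G : SimpleGraph V} {F : Finset (Finset V)} (h : IsM G F)
    {p q : Finset V} {v : V} (hp : p ∈ F) (hq : q ∈ F) (hvp : v ∈ p) (hvq : v ∈ q) : p = q := by
  by_contra hne
  exact Finset.disjoint_left.mp (h.2 p hp q hq hne) hvp hvq

lemma not_mem_msupp_erase {G : SimpleGraph V} {F : Finset (Finset V)} (h : IsM G F)
    {p : Finset V} {v : V} (hp : p ∈ F) (hvp : v ∈ p) : v ∉ msupp (F.erase p) := by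
  intro hv
  obtain ⟨q, hq, hvq⟩ := mem_msupp.mp hv
  exact (Finset.ne_of_mem_erase hq) (partner_unique h (Finset.mem_of_mem_erase hq) hp hvq hvp)

lemma IsM.erase {G : SimpleGraph V} {F : Finset (Finset V)} (h : IsM G F) (p : Finset V) :
    IsM G (F.erase p) :=
  ⟨fun q hq => h.1 q (Finset.mem_of_mem_erase hq),
   fun q hq r hr => h.2 q (Finset.mem_of_mem_erase hq) r (Finset.mem_of_mem_erase hr)⟩

lemma IsM.subset {G : SimpleGraph V} {F F' : Finset (Finset V)} (h : IsM G F) (hs : F' ⊆ F) :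
    IsM G F' :=
  ⟨fun q hq => h.1 q (hs hq), fun q hq r hr => h.2 q (hs hq) r (hs hr)⟩

lemma msupp_mono {F F' : Finset (Finset V)} (hs : F' ⊆ F) : msupp F' ⊆ msupp F := by
  intro v hv; obtain ⟨p, hp, hvp⟩ := mem_msupp.mp hv; exact mem_msupp.mpr ⟨p, hs hp, hvp⟩

lemma IsM.insert {G : SimpleGraph V} {F : Finset (Finset V)} (h : IsM G F)
    {p : Finset V} (hp : IsPair G p) (hd : ∀ v ∈ p, v ∉ msupp F) :
    IsM G (insert p F) := by
  constructor
  · intro q hq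
    rcases Finset.mem_insert.mp hq with rfl | hq
    · exact hp
    · exact h.1 q hq
  · intro q hq r hr hne
    rcases Finset.mem_insert.mp hq with rfl | hq'
    · rcases Finset.mem_insert.mp hr with rfl | hr'
      · exact absurd rfl hne
      · exact Finset.disjoint_left.mpr fun v hv hv' => hd v hv (mem_msupp.mpr ⟨r, hr', hv'⟩)
    · rcases Finset.mem_insert.mp hr with rfl | hr'
      · exact Finset.disjoint_right.mpr fun v hv hv' => hd v hv (mem_msupp.mpr ⟨q, hq', hv'⟩)
      · exact h.2 q hq' r hr' hne

lemma insert_not_mem_of_fresh {G : SimpleGraph V} {F : Finset (Finset V)}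
    {p : Finset V} (hp : IsPair G p) (hd : ∀ v ∈ p, v ∉ msupp F) : p ∉ F := by
  intro hmem
  obtain ⟨a, b, hab, rfl⟩ := hp
  exact hd a (by simp) (mem_msupp.mpr ⟨_, hmem, by simp⟩)

lemma msupp_insert {F : Finset (Finset V)} {p : Finset V} :
    msupp (insert p F) = p ∪ msupp F := by
  ext v; simp [mem_msupp, Finset.mem_union]

/-- `G` has a matching with `t` edges. -/
def HasM (G : SimpleGraph V) (t : ℕ) : Prop :=
  ∃ F : Finset (Finset V), IsM G F ∧ F.card = t

lemma HasM.mono {G : SimpleGraph V} {t t' : ℕ} (h : HasM G t) (ht : t' ≤ t) : HasM G t' := by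
  obtain ⟨F, hF, hcard⟩ := h
  obtain ⟨F', hsub, hcard'⟩ := Finset.exists_subset_card_eq (hcard ▸ ht)
  exact ⟨F', hF.subset hsub, hcard'⟩

end EGaux

namespace EGaux

variable {V : Type} [Fintype V] [DecidableEq V] {G : SimpleGraph V}

lemma other_of_pair {p : Finset V} (hp : IsPair G p) {v : V} (hv : v ∈ p) :
    ∃ w, G.Adj v w ∧ p = {v, w} := by
  obtain ⟨x, y, hxy, rfl⟩ := hp
  rcases Finset.mem_insert.mp hv with rfl | hv
  · exact ⟨y, hxy, rfl⟩
  · rcases Finset.mem_singleton.mp hv with rfl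
    exact ⟨x, hxy.symm, Finset.pair_comm x v⟩

lemma pair_subset_msupp {F : Finset (Finset V)} {p : Finset V} (hp : p ∈ F) :
    p ⊆ msupp F := fun v hv => mem_msupp.mpr ⟨p, hp, hv⟩

lemma msupp_erase_subset_erase {F : Finset (Finset V)} (h : IsM G F)
    {p : Finset V} {v : V} (hp : p ∈ F) (hv : v ∈ p) :
    msupp (F.erase p) ⊆ (msupp F).erase v := by
  intro u hu
  refine Finset.mem_erase.mpr ⟨?_, msupp_mono (Finset.erase_subset _ _) hu⟩
  rintro rfl
  exact not_mem_msupp_erase h hp hv hu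

/-- The key alternating-walk lemma: given matchings `A`, `B` and a vertex `v`
covered by `A` but not `B`, either `B` can be augmented (within the union of supports),
or `A` can be shifted to free up `v`, covering one new vertex `w ∈ supp B \ supp A`. -/
lemma walk : ∀ (n : ℕ) (A B : Finset (Finset V)), B.card = n → IsM G A → IsM G B →
    ∀ v, v ∈ msupp A → v ∉ msupp B →
    (∃ M, IsM G M ∧ M.card = B.card + 1 ∧ msupp M ⊆ msupp A ∪ msupp B) ∨
    (∃ M w, IsM G M ∧ M.card = A.card ∧ w ∈ msupp B ∧ w ∉ msupp A ∧
      msupp M ⊆ ((msupp A).erase v) ∪ {w}) := by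
  intro n
  induction n using Nat.strong_induction_on with
  | _ n IH =>
  intro A B hBn hA hB v hvA hvB
  obtain ⟨e1, he1, hve1⟩ := mem_msupp.mp hvA
  obtain ⟨a, hva, he1eq⟩ := other_of_pair (hA.1 e1 he1) hve1
  have hae1 : a ∈ e1 := he1eq ▸ by simp
  have hane : a ≠ v := hva.ne'
  by_cases haB : a ∈ msupp B
  · -- a is covered by B
    obtain ⟨f1, hf1, haf1⟩ := mem_msupp.mp haB
    obtain ⟨b0, hab0, hf1eq⟩ := other_of_pair (hB.1 f1 hf1) haf1
    have hb0f1 : b0 ∈ f1 := hf1eq ▸ by simp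
    have hb0a : b0 ≠ a := hab0.ne'
    have hb0v : b0 ≠ v := by rintro rfl; exact hvB (mem_msupp.mpr ⟨f1, hf1, hb0f1⟩)
    by_cases hbA : b0 ∈ msupp A
    · -- recurse
      obtain ⟨e2, he2, hbe2⟩ := mem_msupp.mp hbA
      have he2ne : e2 ≠ e1 := by
        rintro rfl
        rw [he1eq] at hbe2
        rcases Finset.mem_insert.mp hbe2 with h' | h'
        · exact hb0v h'
        · exact hb0a (Finset.mem_singleton.mp h')
      have hBpos : 0 < B.card := Finset.card_pos.mpr ⟨f1, hf1⟩
      have hApos : 0 < A.card := Finset.card_pos.mpr ⟨e1, he1⟩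
      have hcard' : (B.erase f1).card = B.card - 1 := Finset.card_erase_of_mem hf1
      have hrec := IH (B.card - 1) (by omega) (A.erase e1) (B.erase f1) hcard'
        (hA.erase e1) (hB.erase f1) b0
        (mem_msupp.mpr ⟨e2, Finset.mem_erase.mpr ⟨he2ne, he2⟩, hbe2⟩)
        (not_mem_msupp_erase hB hf1 hb0f1)
      -- facts for both cases
      have hvA' : v ∉ msupp (A.erase e1) := not_mem_msupp_erase hA he1 hve1
      have haA' : a ∉ msupp (A.erase e1) := not_mem_msupp_erase hA he1 hae1
      have hvB' : v ∉ msupp (B.erase f1) := fun h => hvB (msupp_mono (Finset.erase_subset _ _) h)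
      have haB' : a ∉ msupp (B.erase f1) := not_mem_msupp_erase hB hf1 haf1
      rcases hrec with ⟨M', hM', hMc', hMs'⟩ | ⟨M'', w, hM'', hMc'', hwB', hwA', hMs''⟩
      · -- augment case lifts
        left
        have hfresh : ∀ u ∈ e1, u ∉ msupp M' := by
          intro u hu hmem
          have := hMs' hmem
          rw [he1eq] at hu
          rcases Finset.mem_insert.mp hu with rfl | hu'
          · rcases Finset.mem_union.mp this with h' | h'
            · exact hvA' h'
            · exact hvB' h'
          · rcases Finset.mem_singleton.mp hu' with rfl
            rcases Finset.mem_union.mp this with h' | h'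
            · exact haA' h'
            · exact haB' h'
        refine ⟨insert e1 M', hM'.insert (hA.1 e1 he1) hfresh, ?_, ?_⟩
        · rw [Finset.card_insert_of_notMem (insert_not_mem_of_fresh (hA.1 e1 he1) hfresh)]
          omega
        · rw [msupp_insert]
          apply Finset.union_subset
          · exact (pair_subset_msupp he1).trans (Finset.subset_union_left.trans
              (by exact Finset.union_subset_union (le_refl _) (le_refl _)))
          · refine hMs'.trans (Finset.union_subset_union ?_ ?_)
            · exact msupp_mono (Finset.erase_subset _ _)
            · exact msupp_mono (Finset.erase_subset _ _)
      · -- shift case lifts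
        right
        have hwB : w ∈ msupp B := msupp_mono (Finset.erase_subset _ _) hwB'
        have hwv : w ≠ v := by rintro rfl; exact hvB hwB
        have hwa : w ≠ a := by rintro rfl; exact haB' hwB'
        have hwA : w ∉ msupp A := by
          intro hw
          obtain ⟨p, hp, hwp⟩ := mem_msupp.mp hw
          rcases eq_or_ne p e1 with rfl | hne
          · rw [he1eq] at hwp
            rcases Finset.mem_insert.mp hwp with h' | h'
            · exact hwv h'
            · exact hwa (Finset.mem_singleton.mp h')
          · exact hwA' (mem_msupp.mpr ⟨p, Finset.mem_erase.mpr ⟨hne, hp⟩, hwp⟩)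
        have hfresh : ∀ u ∈ f1, u ∉ msupp M'' := by
          intro u hu hmem
          have hsub := hMs'' hmem
          rw [hf1eq] at hu
          rcases Finset.mem_insert.mp hu with rfl | hu'
          · -- u = a
            rcases Finset.mem_union.mp hsub with h' | h'
            · exact haA' (Finset.mem_of_mem_erase h')
            · exact hwa.symm (Finset.mem_singleton.mp h')
          · have hub : u = b0 := Finset.mem_singleton.mp hu'
            rcases Finset.mem_union.mp hsub with h' | h'
            · exact (Finset.notMem_erase _ _) (hub ▸ h')
            · have hbw : b0 = w := hub ▸ (Finset.mem_singleton.mp h')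
              exact (not_mem_msupp_erase hB hf1 hb0f1) (hbw.symm ▸ hwB')
        refine ⟨insert f1 M'', w, hM''.insert (hB.1 f1 hf1) hfresh, ?_, hwB, hwA, ?_⟩
        · rw [Finset.card_insert_of_notMem (insert_not_mem_of_fresh (hB.1 f1 hf1) hfresh),
            hMc'', Finset.card_erase_of_mem he1]
          omega
        · rw [msupp_insert]
          apply Finset.union_subset
          · rw [hf1eq]
            intro u hu
            rcases Finset.mem_insert.mp hu with rfl | hu'
            · exact Finset.mem_union_left _ (Finset.mem_erase.mpr
                ⟨hane, mem_msupp.mpr ⟨e1, he1, hae1⟩⟩)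
            · rcases Finset.mem_singleton.mp hu' with rfl
              exact Finset.mem_union_left _ (Finset.mem_erase.mpr ⟨hb0v, hbA⟩)
          · refine hMs''.trans (Finset.union_subset ?_ ?_)
            · intro u hu
              have hu' : u ∈ msupp (A.erase e1) := Finset.mem_of_mem_erase hu
              exact Finset.mem_union_left _ (msupp_erase_subset_erase hA he1 hve1 hu')
            · exact Finset.subset_union_right
    · -- base shift case: b0 ∉ msupp A
      right
      have hfresh : ∀ u ∈ f1, u ∉ msupp (A.erase e1) := by
        intro u hu
        rw [hf1eq] at hu
        rcases Finset.mem_insert.mp hu with rfl | hu'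
        · exact not_mem_msupp_erase hA he1 hae1
        · rcases Finset.mem_singleton.mp hu' with rfl
          exact fun h => hbA (msupp_mono (Finset.erase_subset _ _) h)
      refine ⟨insert f1 (A.erase e1), b0, (hA.erase e1).insert (hB.1 f1 hf1) hfresh, ?_,
        mem_msupp.mpr ⟨f1, hf1, hb0f1⟩, hbA, ?_⟩
      · rw [Finset.card_insert_of_notMem (insert_not_mem_of_fresh (hB.1 f1 hf1) hfresh),
          Finset.card_erase_of_mem he1]
        have : 0 < A.card := Finset.card_pos.mpr ⟨e1, he1⟩
        omega
      · rw [msupp_insert]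
        apply Finset.union_subset
        · rw [hf1eq]
          intro u hu
          rcases Finset.mem_insert.mp hu with rfl | hu'
          · exact Finset.mem_union_left _ (Finset.mem_erase.mpr
              ⟨hane, mem_msupp.mpr ⟨e1, he1, hae1⟩⟩)
          · rcases Finset.mem_singleton.mp hu' with rfl
            exact Finset.mem_union_right _ (Finset.mem_singleton_self _)
        · exact (msupp_erase_subset_erase hA he1 hve1).trans Finset.subset_union_left
  · -- base augment case: a ∉ msupp B
    left
    have hfresh : ∀ u ∈ e1, u ∉ msupp B := by
      intro u hu
      rw [he1eq] at hu
      rcases Finset.mem_insert.mp hu with rfl | hu'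
      · exact hvB
      · rcases Finset.mem_singleton.mp hu' with rfl; exact haB
    refine ⟨insert e1 B, hB.insert (hA.1 e1 he1) hfresh, ?_, ?_⟩
    · rw [Finset.card_insert_of_notMem (insert_not_mem_of_fresh (hA.1 e1 he1) hfresh)]
    · rw [msupp_insert]
      exact Finset.union_subset ((pair_subset_msupp he1).trans Finset.subset_union_left)
        Finset.subset_union_right

end EGaux

namespace EGaux

variable {V : Type} [Fintype V] [DecidableEq V] {G : SimpleGraph V}

lemma isPair_mk {x y : V} (h : G.Adj x y) : IsPair G ({x, y} : Finset V) := ⟨x, y, h, rfl⟩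

lemma hasM_insert_of_free {F : Finset (Finset V)} (hF : IsM G F) {x y : V} (h : G.Adj x y)
    (hx : x ∉ msupp F) (hy : y ∉ msupp F) : HasM G (F.card + 1) := by
  have hfresh : ∀ u ∈ ({x, y} : Finset V), u ∉ msupp F := by
    intro u hu
    rcases Finset.mem_insert.mp hu with rfl | hu'
    · exact hx
    · rcases Finset.mem_singleton.mp hu' with rfl; exact hy
  exact ⟨insert {x, y} F, hF.insert (isPair_mk h) hfresh,
    by rw [Finset.card_insert_of_notMem (insert_not_mem_of_fresh (isPair_mk h) hfresh)]⟩

/-- Exchange lemma: a path x—y—z with x,z nonadjacent, an s-matching avoiding x,z and an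
s-matching avoiding y force an (s+1)-matching. -/
lemma lemX {x y z : V} (hxy : G.Adj x y) (hyz : G.Adj y z) (hxz : x ≠ z)
    {s : ℕ} {M1 M2 : Finset (Finset V)} (h1 : IsM G M1) (h2 : IsM G M2)
    (c1 : M1.card = s) (c2 : M2.card = s)
    (hx1 : x ∉ msupp M1) (hz1 : z ∉ msupp M1) (hy2 : y ∉ msupp M2) :
    HasM G (s + 1) := by
  by_cases hy1 : y ∈ msupp M1
  · rcases walk M2.card M1 M2 rfl h1 h2 y hy1 hy2 with
      ⟨M, hM, hMc, _⟩ | ⟨M, w, hM, hMc, _, hwA, hMs⟩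
    · exact ⟨M, hM, by omega⟩
    · -- M has card s, avoids y, and avoids everything outside (msupp M1).erase y ∪ {w}
      have hyM : y ∉ msupp M := by
        intro h
        rcases Finset.mem_union.mp (hMs h) with h' | h'
        · exact (Finset.notMem_erase _ _) h'
        · have hyw : y = w := Finset.mem_singleton.mp h'
          exact hwA (hyw ▸ hy1)
      by_cases hwx : w = x
      · -- use edge y z
        have hzM : z ∉ msupp M := by
          intro h
          rcases Finset.mem_union.mp (hMs h) with h' | h'
          · exact hz1 (Finset.mem_of_mem_erase h')
          · exact hxz.symm ((Finset.mem_singleton.mp h').trans hwx)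
        have := hasM_insert_of_free hM hyz.symm hzM hyM
        rwa [hMc, c1] at this
      · -- use edge x y
        have hxM : x ∉ msupp M := by
          intro h
          rcases Finset.mem_union.mp (hMs h) with h' | h'
          · exact hx1 (Finset.mem_of_mem_erase h')
          · exact hwx ((Finset.mem_singleton.mp h').symm)
        have := hasM_insert_of_free hM hxy hxM hyM
        rwa [hMc, c1] at this
  · have := hasM_insert_of_free h1 hxy hx1 hy1
    rwa [c1] at this

end EGaux

namespace EGaux

variable {V : Type} [Fintype V] [DecidableEq V] {G : SimpleGraph V}

lemma IsM.union {F1 F2 : Finset (Finset V)} (h1 : IsM G F1) (h2 : IsM G F2)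
    (hd : Disjoint (msupp F1) (msupp F2)) :
    IsM G (F1 ∪ F2) ∧ (F1 ∪ F2).card = F1.card + F2.card := by
  have hdF : Disjoint F1 F2 := by
    rw [Finset.disjoint_left]
    intro p hp1 hp2
    obtain ⟨a, b, hab, rfl⟩ := h1.1 p hp1
    exact Finset.disjoint_left.mp hd
      (mem_msupp.mpr ⟨_, hp1, Finset.mem_insert_self a {b}⟩)
      (mem_msupp.mpr ⟨_, hp2, Finset.mem_insert_self a {b}⟩)
  refine ⟨⟨?_, ?_⟩, Finset.card_union_of_disjoint hdF⟩
  · intro p hp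
    rcases Finset.mem_union.mp hp with h | h
    · exact h1.1 p h
    · exact h2.1 p h
  · intro p hp q hq hne
    rcases Finset.mem_union.mp hp with h | h <;> rcases Finset.mem_union.mp hq with h' | h'
    · exact h1.2 p h q h' hne
    · exact Finset.disjoint_of_subset_left (pair_subset_msupp h)
        (Finset.disjoint_of_subset_right (pair_subset_msupp h') hd)
    · exact Finset.disjoint_of_subset_left (pair_subset_msupp h)
        (Finset.disjoint_of_subset_right (pair_subset_msupp h') hd.symm)
    · exact h2.2 p h q h' hne

/-- a clique on `C` has a matching of size `⌊|C|/2⌋` inside `C`. -/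
lemma cliqueMatch : ∀ (n : ℕ) (C : Finset V), C.card = n →
    (∀ a ∈ C, ∀ b ∈ C, a ≠ b → G.Adj a b) →
    ∃ F, IsM G F ∧ msupp F ⊆ C ∧ F.card = C.card / 2 := by
  intro n
  induction n using Nat.strong_induction_on with
  | _ n IH =>
  intro C hC hclique
  by_cases hsmall : C.card ≤ 1
  · exact ⟨∅, ⟨by simp, by simp⟩, by simp [msupp], by simp only [Finset.card_empty]; omega⟩
  · obtain ⟨a, ha, b, hb, hab⟩ := Finset.one_lt_card.mp (show 1 < C.card by omega)
    set C' := (C.erase a).erase b with hC'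
    have hC'sub : C' ⊆ C := (Finset.erase_subset _ _).trans (Finset.erase_subset _ _)
    have hC'card : C'.card = C.card - 2 := by
      rw [hC', Finset.card_erase_of_mem (Finset.mem_erase.mpr ⟨Ne.symm hab, hb⟩),
        Finset.card_erase_of_mem ha]
      omega
    obtain ⟨F, hF, hFs, hFc⟩ := IH (C.card - 2) (by omega) C' hC'card
      (fun x hx y hy hxy => hclique x (hC'sub hx) y (hC'sub hy) hxy)
    have haF : a ∉ msupp F := fun h => (Finset.notMem_erase a _) (Finset.mem_of_mem_erase (hFs h))
    have hbF : b ∉ msupp F := fun h => (Finset.notMem_erase b _) (hFs h)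
    have hadj : G.Adj a b := hclique a ha b hb hab
    have hfresh : ∀ u ∈ ({a, b} : Finset V), u ∉ msupp F := by
      intro u hu
      rcases Finset.mem_insert.mp hu with rfl | hu'
      · exact haF
      · rcases Finset.mem_singleton.mp hu' with rfl; exact hbF
    refine ⟨insert {a, b} F, hF.insert (isPair_mk hadj) hfresh, ?_, ?_⟩
    · rw [msupp_insert]
      apply Finset.union_subset _ (hFs.trans hC'sub)
      intro u hu
      rcases Finset.mem_insert.mp hu with rfl | hu'
      · exact ha
      · rcases Finset.mem_singleton.mp hu' with rfl; exact hb
    · rw [Finset.card_insert_of_notMem (insert_not_mem_of_fresh (isPair_mk hadj) hfresh), hFc]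
      omega

/-- pad a matching with universal vertices -/
lemma padMatch : ∀ (k : ℕ) (Us : Finset V) (F : Finset (Finset V)), Us.card = k → IsM G F →
    (∀ u ∈ Us, ∀ v, v ≠ u → G.Adj u v) → Disjoint Us (msupp F) →
    2 * F.card + 2 * Us.card ≤ Fintype.card V →
    HasM G (F.card + Us.card) := by
  intro k
  induction k using Nat.strong_induction_on with
  | _ k IH =>
  intro Us F hk hF huniv hdisj hcard
  rcases Finset.eq_empty_or_nonempty Us with rfl | ⟨u, hu⟩
  · exact ⟨F, hF, by simp⟩
  · have hsupp : (msupp F).card = 2 * F.card := msupp_card hF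
    -- find a partner for u
    have hbig : ((Finset.univ : Finset V) \ (msupp F ∪ Us)).card ≥ 1 := by
      have h1 : (msupp F ∪ Us).card ≤ 2 * F.card + Us.card := by
        calc (msupp F ∪ Us).card ≤ (msupp F).card + Us.card := Finset.card_union_le _ _
        _ = 2 * F.card + Us.card := by rw [hsupp]
      have h2 : ((Finset.univ : Finset V) \ (msupp F ∪ Us)).card
          = Fintype.card V - (msupp F ∪ Us).card := by
        rw [Finset.card_sdiff_of_subset (Finset.subset_univ _), Finset.card_univ]
      have hUpos : 0 < Us.card := Finset.card_pos.mpr ⟨u, hu⟩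
      omega
    have hpos : 0 < ((Finset.univ : Finset V) \ (msupp F ∪ Us)).card := by omega
    obtain ⟨p, hp⟩ := Finset.card_pos.mp hpos
    have hpF : p ∉ msupp F := fun h =>
      (Finset.mem_sdiff.mp hp).2 (Finset.mem_union_left _ h)
    have hpU : p ∉ Us := fun h =>
      (Finset.mem_sdiff.mp hp).2 (Finset.mem_union_right _ h)
    have hpu : p ≠ u := fun h => hpU (h ▸ hu)
    have hadj : G.Adj u p := huniv u hu p hpu
    have huF : u ∉ msupp F := Finset.disjoint_left.mp hdisj hu
    have hfresh : ∀ w ∈ ({u, p} : Finset V), w ∉ msupp F := by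
      intro w hw
      rcases Finset.mem_insert.mp hw with rfl | hw'
      · exact huF
      · rcases Finset.mem_singleton.mp hw' with rfl; exact hpF
    set F' := insert ({u, p} : Finset V) F with hF'def
    have hF' : IsM G F' := hF.insert (isPair_mk hadj) hfresh
    have hF'c : F'.card = F.card + 1 := by
      rw [hF'def, Finset.card_insert_of_notMem (insert_not_mem_of_fresh (isPair_mk hadj) hfresh)]
    have hUs' : (Us.erase u).card = Us.card - 1 := Finset.card_erase_of_mem hu
    have hUpos : 0 < Us.card := Finset.card_pos.mpr ⟨u, hu⟩
    have hdisj' : Disjoint (Us.erase u) (msupp F') := by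
      rw [hF'def, msupp_insert]
      rw [Finset.disjoint_union_right]
      constructor
      · rw [Finset.disjoint_left]
        intro w hw hw'
        rcases Finset.mem_insert.mp hw' with rfl | hw''
        · exact (Finset.notMem_erase _ _) hw
        · rcases Finset.mem_singleton.mp hw'' with rfl
          exact hpU (Finset.mem_of_mem_erase hw)
      · exact Finset.disjoint_of_subset_left (Finset.erase_subset _ _) hdisj
    have := IH (Us.card - 1) (by omega) (Us.erase u) F' hUs' hF'
      (fun w hw v hv => huniv w (Finset.mem_of_mem_erase hw) v hv) hdisj' (by omega)
    have heq : F'.card + (Us.erase u).card = F.card + Us.card := by omega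
    rwa [heq] at this

end EGaux

namespace EGaux

variable {V : Type} [Fintype V] [DecidableEq V] {G : SimpleGraph V}

lemma two_mul_choose_two : ∀ x : ℕ, 2 * x.choose 2 = x * (x - 1) := by
  intro x
  induction x with
  | zero => rfl
  | succ m ih =>
    rw [Nat.choose_succ_succ, Nat.choose_one_right, Nat.mul_add, ih]
    cases m with
    | zero => rfl
    | succ j =>
      simp only [Nat.succ_sub_one]
      ring

open scoped Classical in
/-- the set of edge-pairs of `G` inside `T` -/
noncomputable def pairsIn (G : SimpleGraph V) (T : Finset V) : Finset (Finset V) :=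
  Finset.univ.filter (fun p => IsPair G p ∧ p ⊆ T)

lemma mem_pairsIn {T : Finset V} {p : Finset V} :
    p ∈ pairsIn G T ↔ IsPair G p ∧ p ⊆ T := by
  classical
  simp [pairsIn]

lemma pairsIn_card_le (T : Finset V) : (pairsIn G T).card ≤ T.card.choose 2 := by
  classical
  rw [← Finset.card_powersetCard]
  apply Finset.card_le_card
  intro p hp
  obtain ⟨hpair, hsub⟩ := mem_pairsIn.mp hp
  exact Finset.mem_powersetCard.mpr ⟨hsub, hpair.card_eq⟩

lemma choose_two_merge (h g : ℕ) :
    (2*h+1).choose 2 + (2*g+1).choose 2 ≤ (2*(h+g)+1).choose 2 := by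
  have e1 := two_mul_choose_two (2*h+1)
  have e2 := two_mul_choose_two (2*g+1)
  have e3 := two_mul_choose_two (2*(h+g)+1)
  simp only [Nat.add_sub_cancel] at e1 e2 e3
  nlinarith [e1, e2, e3]

/-- Edge bound for a graph whose adjacency is transitive on `T` (disjoint cliques):
if there is no (σ+1)-matching inside `T` then the number of edges inside `T`
is at most `C(2σ+1, 2)`. -/
lemma cliqueUnionBound : ∀ (n : ℕ) (T : Finset V), T.card = n →
    (∀ x ∈ T, ∀ y ∈ T, ∀ z ∈ T, G.Adj x y → G.Adj y z → x ≠ z → G.Adj x z) →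
    ∀ σ : ℕ, (¬ ∃ F, IsM G F ∧ msupp F ⊆ T ∧ F.card = σ + 1) →
    (pairsIn G T).card ≤ (2*σ+1).choose 2 := by
  intro n
  induction n using Nat.strong_induction_on with
  | _ n IH =>
  intro T hT htr σ hno
  classical
  rcases Finset.eq_empty_or_nonempty T with rfl | ⟨v, hv⟩
  · calc (pairsIn G ∅).card ≤ (0:ℕ).choose 2 := by simpa using pairsIn_card_le (∅ : Finset V)
    _ ≤ (2*σ+1).choose 2 := Nat.choose_le_choose 2 (by omega)
  · set C := T.filter (fun w => w = v ∨ G.Adj v w) with hC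
    have hvC : v ∈ C := by rw [hC]; exact Finset.mem_filter.mpr ⟨hv, Or.inl rfl⟩
    have hCT : C ⊆ T := Finset.filter_subset _ _
    have hCclique : ∀ a ∈ C, ∀ b ∈ C, a ≠ b → G.Adj a b := by
      intro a ha b hb hab
      obtain ⟨haT, hav⟩ := Finset.mem_filter.mp ha
      obtain ⟨hbT, hbv⟩ := Finset.mem_filter.mp hb
      rcases hav with rfl | hav
      · rcases hbv with rfl | hbv
        · exact absurd rfl hab
        · exact hbv
      · rcases hbv with rfl | hbv
        · exact hav.symm
        · exact htr a haT v hv b hbT hav.symm hbv hab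
    -- no edges cross from C to T \ C
    have hnocross : ∀ p, IsPair G p → p ⊆ T → p ⊆ C ∨ p ⊆ T \ C := by
      intro p hpair hsub
      obtain ⟨a, b, hab, rfl⟩ := hpair
      have haT : a ∈ T := hsub (by simp)
      have hbT : b ∈ T := hsub (by simp)
      have key : ∀ x y : V, x ∈ T → y ∈ T → G.Adj x y → x ∈ C → y ∈ C := by
        intro x y hxT hyT hxy hxC
        obtain ⟨_, hxv⟩ := Finset.mem_filter.mp hxC
        rcases hxv with rfl | hxv
        · exact Finset.mem_filter.mpr ⟨hyT, Or.inr hxy⟩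
        · rcases eq_or_ne y v with rfl | hyv
          · exact hvC
          · exact Finset.mem_filter.mpr ⟨hyT, Or.inr (htr v hv x hxT y hyT hxv hxy hyv.symm)⟩
      by_cases haC : a ∈ C
      · left
        have hbC : b ∈ C := key a b haT hbT hab haC
        intro u hu
        rcases Finset.mem_insert.mp hu with rfl | hu'
        · exact haC
        · rcases Finset.mem_singleton.mp hu' with rfl; exact hbC
      · right
        have hbC : b ∉ C := fun hbC => haC (key b a hbT haT hab.symm hbC)
        intro u hu
        rcases Finset.mem_insert.mp hu with rfl | hu'
        · exact Finset.mem_sdiff.mpr ⟨haT, haC⟩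
        · rcases Finset.mem_singleton.mp hu' with rfl; exact Finset.mem_sdiff.mpr ⟨hbT, hbC⟩
    have hsplit : (pairsIn G T).card = (pairsIn G C).card + (pairsIn G (T \ C)).card := by
      rw [← Finset.card_union_of_disjoint]
      · congr 1
        ext p
        simp only [Finset.mem_union, mem_pairsIn]
        constructor
        · rintro ⟨hpair, hsub⟩
          rcases hnocross p hpair hsub with h | h
          · exact Or.inl ⟨hpair, h⟩
          · exact Or.inr ⟨hpair, h⟩
        · rintro (⟨hpair, hsub⟩ | ⟨hpair, hsub⟩)
          · exact ⟨hpair, hsub.trans hCT⟩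
          · exact ⟨hpair, hsub.trans (Finset.sdiff_subset)⟩
      · rw [Finset.disjoint_left]
        intro p hp hp'
        obtain ⟨hpair, hsub⟩ := mem_pairsIn.mp hp
        obtain ⟨_, hsub'⟩ := mem_pairsIn.mp hp'
        obtain ⟨a, b, hab, rfl⟩ := hpair
        have : a ∈ C := hsub (by simp)
        have : a ∈ T \ C := hsub' (by simp)
        exact (Finset.mem_sdiff.mp this).2 ‹a ∈ C›
    -- C has a matching of size ⌊|C|/2⌋ inside it
    obtain ⟨FC, hFC, hFCs, hFCc⟩ := cliqueMatch C.card C rfl hCclique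
    set h := C.card / 2 with hh
    have hhσ : h ≤ σ := by
      by_contra hcon
      push_neg at hcon
      obtain ⟨F', hsub', hcard'⟩ := Finset.exists_subset_card_eq (show σ+1 ≤ FC.card by omega)
      exact hno ⟨F', hFC.subset hsub', (msupp_mono hsub').trans (hFCs.trans hCT), hcard'⟩
    -- no (σ - h + 1)-matching inside T \ C
    have hno' : ¬ ∃ F, IsM G F ∧ msupp F ⊆ T \ C ∧ F.card = (σ - h) + 1 := by
      rintro ⟨F, hF, hFs, hFc⟩
      have hdisj : Disjoint (msupp FC) (msupp F) := by
        apply Finset.disjoint_of_subset_left hFCs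
        apply Finset.disjoint_of_subset_right hFs
        exact Finset.disjoint_sdiff
      obtain ⟨hunion, hcard⟩ := hFC.union hF hdisj
      have hsz : σ + 1 ≤ (FC ∪ F).card := by omega
      obtain ⟨F', hsub', hcard'⟩ := Finset.exists_subset_card_eq hsz
      refine hno ⟨F', hunion.subset hsub', ?_, hcard'⟩
      refine (msupp_mono hsub').trans ?_
      intro u hu
      obtain ⟨p, hp, hup⟩ := mem_msupp.mp hu
      rcases Finset.mem_union.mp hp with h' | h'
      · exact hCT (hFCs (mem_msupp.mpr ⟨p, h', hup⟩))
      · exact Finset.sdiff_subset (hFs (mem_msupp.mpr ⟨p, h', hup⟩))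
    have hTC : (T \ C).card = T.card - C.card := Finset.card_sdiff_of_subset hCT
    have hCpos : 0 < C.card := Finset.card_pos.mpr ⟨v, hvC⟩
    have hTpos : 0 < T.card := Finset.card_pos.mpr ⟨v, hv⟩
    have hrec := IH (T \ C).card (by omega) (T \ C) rfl
      (fun x hx y hy z hz => htr x (Finset.sdiff_subset hx) y (Finset.sdiff_subset hy)
        z (Finset.sdiff_subset hz)) (σ - h) hno'
    have hCedges : (pairsIn G C).card ≤ (2*h+1).choose 2 := by
      calc (pairsIn G C).card ≤ C.card.choose 2 := pairsIn_card_le C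
      _ ≤ (2*h+1).choose 2 := Nat.choose_le_choose 2 (by omega)
    calc (pairsIn G T).card = (pairsIn G C).card + (pairsIn G (T \ C)).card := hsplit
    _ ≤ (2*h+1).choose 2 + (2*(σ-h)+1).choose 2 := Nat.add_le_add hCedges hrec
    _ ≤ (2*(h + (σ-h))+1).choose 2 := choose_two_merge h (σ - h)
    _ = (2*σ+1).choose 2 := by congr 2; omega

end EGaux

namespace EGaux

variable {V : Type} [Fintype V] [DecidableEq V] {G : SimpleGraph V}

lemma two_mul_choose_two' (x : ℕ) : 2 * x.choose 2 + x = x * x := by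
  have h := two_mul_choose_two x
  cases x with
  | zero => simp
  | succ u =>
    rw [Nat.succ_sub_one] at h
    have h2 : (u+1)*u + (u+1) = (u+1)*(u+1) := by ring
    omega

lemma choose_two_split (a b : ℕ) : (a+b).choose 2 = a.choose 2 + a*b + b.choose 2 := by
  have h := two_mul_choose_two' (a+b)
  have h1 := two_mul_choose_two' a
  have h2 := two_mul_choose_two' b
  have hr : (a+b)*(a+b) = a*a + 2*(a*b) + b*b := by ring
  omega

lemma EGnum (t a d : ℕ) :
    (2*a+1).choose 2 + (t.choose 2 + t*(t+2*a+2+d)) ≤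
      max ((2*(t+a)+1).choose 2) ((t+a).choose 2 + (t+a)*((t+a)+2+d)) := by
  have h1 := two_mul_choose_two' (2*a+1)
  have h2 := two_mul_choose_two' t
  have h3 := two_mul_choose_two' (2*(t+a)+1)
  have h4 := two_mul_choose_two' (t+a)
  by_cases hc : 2*t + 2*d + 1 ≤ a
  · refine le_trans ?_ (le_max_left _ _)
    obtain ⟨e, rfl⟩ : ∃ e, a = 2*t+2*d+1+e := ⟨a-(2*t+2*d+1), by omega⟩
    nlinarith [h1, h2, h3]
  · refine le_trans ?_ (le_max_right _ _)
    push_neg at hc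
    obtain ⟨f, hf⟩ : ∃ f, 2*t+2*d = a + f := ⟨2*t+2*d-a, by omega⟩
    nlinarith [h1, h2, h3, h4]

lemma isPair_mono {G' : SimpleGraph V} (h : G ≤ G') {p : Finset V} (hp : IsPair G p) :
    IsPair G' p := by
  obtain ⟨a, b, hab, rfl⟩ := hp
  exact ⟨a, b, h hab, rfl⟩

lemma isM_mono {G' : SimpleGraph V} (h : G ≤ G') {F : Finset (Finset V)} (hF : IsM G F) :
    IsM G' F := ⟨fun p hp => isPair_mono h (hF.1 p hp), hF.2⟩

/-- Adding the edge xy. -/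
abbrev addEdge (G : SimpleGraph V) (x y : V) : SimpleGraph V :=
  G ⊔ SimpleGraph.fromEdgeSet {s(x,y)}

lemma addEdge_adj {x y u v : V} (hxy : x ≠ y) :
    (addEdge G x y).Adj u v ↔ G.Adj u v ∨ ((u = x ∧ v = y) ∨ (u = y ∧ v = x)) := by
  simp only [addEdge, SimpleGraph.sup_adj, SimpleGraph.fromEdgeSet_adj, Set.mem_singleton_iff,
    Sym2.eq_iff]
  constructor
  · rintro (h | ⟨h, _⟩)
    · exact Or.inl h
    · exact Or.inr h
  · rintro (h | h)
    · exact Or.inl h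
    · refine Or.inr ⟨h, ?_⟩
      rcases h with ⟨rfl, rfl⟩ | ⟨rfl, rfl⟩
      · exact hxy
      · exact hxy.symm

lemma isPair_addEdge {x y : V} (hxy : x ≠ y) {p : Finset V} (hp : IsPair (addEdge G x y) p) :
    p = {x, y} ∨ IsPair G p := by
  obtain ⟨a, b, hab, rfl⟩ := hp
  rcases (addEdge_adj hxy).mp hab with h | h
  · exact Or.inr ⟨a, b, h, rfl⟩
  · rcases h with ⟨rfl, rfl⟩ | ⟨rfl, rfl⟩
    · exact Or.inl rfl
    · exact Or.inl (Finset.pair_comm _ _)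

lemma saturation_extract {x y : V} {s : ℕ} (hxy : x ≠ y) (hno : ¬ HasM G (s+1))
    (hsat : HasM (addEdge G x y) (s+1)) :
    ∃ F, IsM G F ∧ F.card = s ∧ x ∉ msupp F ∧ y ∉ msupp F := by
  obtain ⟨F', hF', hc'⟩ := hsat
  by_cases hmem : ({x, y} : Finset V) ∈ F'
  · refine ⟨F'.erase {x,y}, ⟨?_, fun p hp q hq => (hF'.erase _).2 p hp q hq⟩,
      by rw [Finset.card_erase_of_mem hmem]; omega, ?_, ?_⟩
    · intro p hp
      have hne := Finset.ne_of_mem_erase hp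
      rcases isPair_addEdge hxy (hF'.1 p (Finset.mem_of_mem_erase hp)) with h | h
      · exact absurd h hne
      · exact h
    · exact not_mem_msupp_erase hF' hmem (Finset.mem_insert_self _ _)
    · exact not_mem_msupp_erase hF' hmem (by simp)
  · exfalso
    apply hno
    refine ⟨F', ⟨?_, hF'.2⟩, hc'⟩
    intro p hp
    rcases isPair_addEdge hxy (hF'.1 p hp) with h | h
    · exact absurd (h ▸ hp) hmem
    · exact h

open scoped Classical in
noncomputable def freePairs (G : SimpleGraph V) : Finset (Finset V) :=
  Finset.univ.filter (fun p => p.card = 2 ∧ ¬ IsPair G p)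

lemma isPair_pair_iff {x y : V} (hxy : x ≠ y) : IsPair G ({x,y} : Finset V) ↔ G.Adj x y := by
  constructor
  · rintro ⟨a, b, hab, heq⟩
    have hx : x ∈ ({a, b} : Finset V) := heq ▸ Finset.mem_insert_self x {y}
    have hy : y ∈ ({a, b} : Finset V) := heq ▸ (by simp : y ∈ ({x,y} : Finset V))
    rcases Finset.mem_insert.mp hx with rfl | hx'
    · rcases Finset.mem_insert.mp hy with rfl | hy'
      · exact absurd rfl hxy
      · rw [Finset.mem_singleton.mp hy']; exact hab
    · rcases Finset.mem_insert.mp hy with rfl | hy'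
      · rw [Finset.mem_singleton.mp hx']; exact hab.symm
      · rw [Finset.mem_singleton.mp hx', Finset.mem_singleton.mp hy'] at hxy
        exact absurd rfl hxy
  · exact fun h => isPair_mk h

lemma freePairs_lt {x y : V} (hxy : x ≠ y) (hnadj : ¬ G.Adj x y) :
    (freePairs (addEdge G x y)).card < (freePairs G).card := by
  classical
  apply Finset.card_lt_card
  rw [Finset.ssubset_iff_of_subset]
  · refine ⟨{x, y}, ?_, ?_⟩
    · simp only [freePairs, Finset.mem_filter, Finset.mem_univ, true_and]
      constructor
      · rw [Finset.card_insert_of_notMem (by simp [hxy]), Finset.card_singleton]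
      · rw [isPair_pair_iff hxy]; exact hnadj
    · simp only [freePairs, Finset.mem_filter, Finset.mem_univ, true_and, not_and, not_not]
      intro _
      rw [isPair_pair_iff hxy]
      exact (addEdge_adj hxy).mpr (Or.inr (Or.inl ⟨rfl, rfl⟩))
  · intro p hp
    simp only [freePairs, Finset.mem_filter, Finset.mem_univ, true_and] at hp ⊢
    exact ⟨hp.1, fun h => hp.2 (isPair_mono le_sup_left h)⟩

/-- Erdős–Gallai matching theorem. -/
theorem EG : ∀ (c : ℕ) (G : SimpleGraph V), (freePairs G).card = c → ∀ s : ℕ, ¬ HasM G (s+1) →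
    (pairsIn G Finset.univ).card ≤
      max ((2*s+1).choose 2) (s.choose 2 + s * (Fintype.card V - s)) := by
  intro c
  induction c using Nat.strong_induction_on with
  | _ c IH =>
  intro G hc s hno
  classical
  set n := Fintype.card V with hn
  by_cases hsmall : n ≤ 2*s+1
  · refine le_trans ?_ (le_max_left _ _)
    calc (pairsIn G Finset.univ).card ≤ (Finset.univ : Finset V).card.choose 2 :=
      pairsIn_card_le _
    _ ≤ (2*s+1).choose 2 := Nat.choose_le_choose 2 (by rw [Finset.card_univ]; omega)
  push_neg at hsmall
  by_cases hsat : ∃ x y, x ≠ y ∧ ¬ G.Adj x y ∧ ¬ HasM (addEdge G x y) (s+1)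
  · obtain ⟨x, y, hxy, hnadj, hno'⟩ := hsat
    have hlt := freePairs_lt hxy hnadj
    have hbound := IH (freePairs (addEdge G x y)).card (by omega) _ rfl s hno'
    refine le_trans ?_ hbound
    apply Finset.card_le_card
    intro p hp
    obtain ⟨hpair, hsub⟩ := mem_pairsIn.mp hp
    exact mem_pairsIn.mpr ⟨isPair_mono le_sup_left hpair, hsub⟩
  · push_neg at hsat
    have hM12 : ∀ x y : V, x ≠ y → ¬ G.Adj x y →
        ∃ F, IsM G F ∧ F.card = s ∧ x ∉ msupp F ∧ y ∉ msupp F :=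
      fun x y h1 h2 => saturation_extract h1 hno (hsat x y h1 h2)
    set U := Finset.univ.filter (fun u => ∀ w : V, w ≠ u → G.Adj u w) with hU
    set t := U.card with ht
    have huniv : ∀ u ∈ U, ∀ w : V, w ≠ u → G.Adj u w :=
      fun u hu => (Finset.mem_filter.mp hu).2
    have hts : t ≤ s := by
      by_contra hcon
      push_neg at hcon
      obtain ⟨U', hU'sub, hU'c⟩ := Finset.exists_subset_card_eq (show s+1 ≤ U.card by omega)
      have := padMatch (s+1) U' ∅ hU'c ⟨by simp, by simp⟩
        (fun u hu => huniv u (hU'sub hu)) (by simp [msupp]) (by simp; omega)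
      simp only [Finset.card_empty, zero_add, hU'c] at this
      exact hno this
    set W := (Finset.univ : Finset V) \ U with hW
    have htrans : ∀ x ∈ W, ∀ y ∈ W, ∀ z ∈ W, G.Adj x y → G.Adj y z → x ≠ z → G.Adj x z := by
      intro x hx y hy z hz hxy hyz hxz
      by_contra hnadj
      have hyU : y ∉ U := (Finset.mem_sdiff.mp hy).2
      rw [hU, Finset.mem_filter] at hyU
      push_neg at hyU
      obtain ⟨w, hw1, hw2⟩ := hyU (Finset.mem_univ y)
      obtain ⟨F1, h1, c1, hx1, hz1⟩ := hM12 x z hxz hnadj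
      obtain ⟨F2, h2, c2, hy2, _⟩ := hM12 y w (Ne.symm hw1) hw2
      exact hno (lemX hxy hyz hxz h1 h2 c1 c2 hx1 hz1 hy2)
    have hnoW : ¬ ∃ F, IsM G F ∧ msupp F ⊆ W ∧ F.card = (s - t) + 1 := by
      rintro ⟨F, hF, hFs, hFc⟩
      have hdisj : Disjoint U (msupp F) := by
        apply Finset.disjoint_of_subset_right hFs
        rw [hW]
        exact Finset.disjoint_sdiff
      have := padMatch t U F rfl hF huniv hdisj (by omega)
      rw [hFc] at this
      have heq : (s - t) + 1 + t = s + 1 := by omega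
      rw [heq] at this
      exact hno this
    have hCU := cliqueUnionBound W.card W rfl htrans (s - t) hnoW
    have hWcard : W.card = n - t := by
      rw [hW, Finset.card_sdiff_of_subset (Finset.subset_univ _), Finset.card_univ]
    -- counting
    have hsub : pairsIn G W ⊆ pairsIn G Finset.univ := by
      intro p hp
      obtain ⟨hpair, _⟩ := mem_pairsIn.mp hp
      exact mem_pairsIn.mpr ⟨hpair, Finset.subset_univ _⟩
    have hsd : (pairsIn G Finset.univ \ pairsIn G W) ⊆
        ((Finset.univ : Finset V).powersetCard 2) \ (W.powersetCard 2) := by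
      intro p hp
      obtain ⟨hpA, hpB⟩ := Finset.mem_sdiff.mp hp
      obtain ⟨hpair, _⟩ := mem_pairsIn.mp hpA
      refine Finset.mem_sdiff.mpr ⟨Finset.mem_powersetCard.mpr ⟨Finset.subset_univ _,
        hpair.card_eq⟩, ?_⟩
      intro hmem
      exact hpB (mem_pairsIn.mpr ⟨hpair, (Finset.mem_powersetCard.mp hmem).1⟩)
    have hcount : (pairsIn G Finset.univ).card ≤
        (pairsIn G W).card + (n.choose 2 - (n-t).choose 2) := by
      have h1 : (pairsIn G Finset.univ \ pairsIn G W).card + (pairsIn G W).card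
          = (pairsIn G Finset.univ).card := Finset.card_sdiff_add_card_eq_card hsub
      have h2 : (pairsIn G Finset.univ \ pairsIn G W).card ≤
          (((Finset.univ : Finset V).powersetCard 2) \ (W.powersetCard 2)).card :=
        Finset.card_le_card hsd
      have h3 : (((Finset.univ : Finset V).powersetCard 2) \ (W.powersetCard 2)).card
          = n.choose 2 - (n-t).choose 2 := by
        rw [Finset.card_sdiff_of_subset (Finset.powersetCard_mono (Finset.subset_univ _)),
          Finset.card_powersetCard, Finset.card_powersetCard, Finset.card_univ, hWcard]
      omega
    -- assemble
    obtain ⟨a, ha⟩ : ∃ a, s = t + a := ⟨s - t, by omega⟩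
    obtain ⟨d, hd⟩ : ∃ d, n = 2*s + 2 + d := ⟨n - (2*s+2), by omega⟩
    have hid : n.choose 2 = t.choose 2 + t*(n-t) + (n-t).choose 2 := by
      conv_lhs => rw [show n = t + (n-t) by omega]
      rw [choose_two_split]
    have e1 : s - t = a := by omega
    have e2 : n - t = t + 2*a + 2 + d := by omega
    have e3 : n - s = s + 2 + d := by omega
    calc (pairsIn G Finset.univ).card
        ≤ (pairsIn G W).card + (n.choose 2 - (n-t).choose 2) := hcount
      _ ≤ (2*(s-t)+1).choose 2 + (t.choose 2 + t*(n-t)) := by omega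
      _ = (2*a+1).choose 2 + (t.choose 2 + t*(t + 2*a + 2 + d)) := by rw [e1, e2]
      _ ≤ max ((2*(t+a)+1).choose 2) ((t+a).choose 2 + (t+a)*((t+a)+2+d)) := EGnum t a d
      _ = max ((2*s+1).choose 2) (s.choose 2 + s * (n - s)) := by rw [e3, ha]

end EGaux

namespace EGaux

variable {V : Type} [Fintype V] [DecidableEq V] {G : SimpleGraph V}

lemma pair_finset_eq {a b c d : V} (hab : a ≠ b) (h : ({a,b} : Finset V) = {c,d}) :
    (a = c ∧ b = d) ∨ (a = d ∧ b = c) := by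
  have ha : a = c ∨ a = d := by
    have : a ∈ ({c,d} : Finset V) := h ▸ (by simp)
    simpa using this
  have hb : b = c ∨ b = d := by
    have : b ∈ ({c,d} : Finset V) := h ▸ (by simp)
    simpa using this
  have hc : c = a ∨ c = b := by
    have : c ∈ ({a,b} : Finset V) := h.symm ▸ (by simp)
    simpa using this
  have hd : d = a ∨ d = b := by
    have : d ∈ ({a,b} : Finset V) := h.symm ▸ (by simp)
    simpa using this
  subst_eqs
  rcases ha with ha|ha <;> rcases hb with hb|hb <;> rcases hc with hc|hc <;>
    rcases hd with hd|hd <;> subst_eqs <;> tauto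

/-- number of edges equals number of edge-pairs -/
lemma edgeSet_ncard_eq_pairs (H : SimpleGraph V) :
    H.edgeSet.ncard = (pairsIn H Finset.univ).card := by
  classical
  set f : Sym2 V → Finset V := Sym2.lift ⟨fun a b => ({a,b} : Finset V), fun a b => Finset.pair_comm a b⟩
    with hf
  have hfval : ∀ a b : V, f s(a,b) = {a,b} := fun a b => rfl
  have hinj : Set.InjOn f H.edgeSet := by
    intro e1 he1 e2 he2 heq
    induction e1 using Sym2.inductionOn with | _ a b =>
    induction e2 using Sym2.inductionOn with | _ c d =>
    rw [hfval, hfval] at heq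
    have hab : a ≠ b := ((SimpleGraph.mem_edgeSet _).mp he1).ne
    rcases pair_finset_eq hab heq with ⟨rfl, rfl⟩ | ⟨rfl, rfl⟩
    · rfl
    · exact Sym2.eq_swap
  have himg : f '' H.edgeSet = ↑(pairsIn H Finset.univ) := by
    ext p
    constructor
    · rintro ⟨e, he, rfl⟩
      induction e using Sym2.inductionOn with | _ a b =>
      rw [hfval]
      exact_mod_cast mem_pairsIn.mpr ⟨⟨a, b, (SimpleGraph.mem_edgeSet _).mp he, rfl⟩,
        Finset.subset_univ _⟩
    · intro hp
      obtain ⟨⟨a, b, hab, rfl⟩, _⟩ := mem_pairsIn.mp (by exact_mod_cast hp)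
      exact ⟨s(a,b), (SimpleGraph.mem_edgeSet _).mpr hab, rfl⟩
  calc H.edgeSet.ncard = (f '' H.edgeSet).ncard := (Set.ncard_image_of_injOn hinj).symm
  _ = (pairsIn H Finset.univ).card := by rw [himg, Set.ncard_coe_finset]

/-- The dense-graph matching corollary of Erdős–Gallai. -/
lemma dense_hasM (H : SimpleGraph V) (β : ℝ) (hβ0 : 16/25 ≤ β) (hβ1 : β ≤ 1)
    (M : ℕ) (hM : (M : ℝ) ≤ Real.sqrt β * (Fintype.card V) / 2)
    (hdense : β * ((Fintype.card V).choose 2 : ℕ) ≤ ((pairsIn H Finset.univ).card : ℝ)) :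
    HasM H M := by
  classical
  rcases Nat.eq_zero_or_pos M with rfl | hMpos
  · exact ⟨∅, ⟨by simp, by simp⟩, rfl⟩
  obtain ⟨s, rfl⟩ : ∃ s, M = s + 1 := ⟨M - 1, by omega⟩
  by_contra hno
  set k := Fintype.card V with hk
  set c := Real.sqrt β with hc
  have hβpos : (0:ℝ) ≤ β := by linarith
  have hc45 : (4/5 : ℝ) ≤ c := by
    rw [hc]
    rw [show (4/5 : ℝ) = Real.sqrt (16/25) by
      rw [show (16/25 : ℝ) = (4/5)^2 by norm_num, Real.sqrt_sq (by norm_num)]]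
    exact Real.sqrt_le_sqrt hβ0
  have hc1 : c ≤ 1 := by
    rw [hc]
    rw [show (1:ℝ) = Real.sqrt 1 by simp]
    exact Real.sqrt_le_sqrt hβ1
  have hβc : β = c^2 := by rw [hc, Real.sq_sqrt hβpos]
  -- k ≥ 2
  have hck : (2:ℝ) ≤ c * k := by
    have : (1:ℝ) ≤ (s:ℝ) + 1 := by
      have := Nat.cast_nonneg (α := ℝ) s
      linarith
    have h1 : ((s:ℝ) + 1) ≤ c * k / 2 := by exact_mod_cast hM
    linarith
  have hk1 : (1:ℝ) ≤ (k:ℝ) := by nlinarith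
  have hk2 : (2:ℝ) ≤ (k:ℝ) := by nlinarith
  have hkn2 : 2 ≤ k := by exact_mod_cast hk2
  -- EG bound
  have hEG := EG (freePairs H).card H rfl s hno
  -- cast identities
  have hchk : 2 * (k.choose 2) = k * (k-1) := two_mul_choose_two k
  have hchkR : 2 * ((k.choose 2 : ℕ):ℝ) = (k:ℝ) * ((k:ℝ)-1) := by
    have := congrArg (fun x : ℕ => (x:ℝ)) hchk
    push_cast [Nat.cast_sub (show 1 ≤ k by omega)] at this
    linarith [this]
  have hsreal : (s:ℝ) + 1 ≤ c * k / 2 := by exact_mod_cast hM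
  -- both branches are < β * C(k,2)
  have hb1 : (((2*s+1).choose 2 : ℕ) : ℝ) < β * ((k.choose 2 : ℕ):ℝ) := by
    have h1 : 2 * ((2*s+1).choose 2) = (2*s+1) * (2*s) := by
      have := two_mul_choose_two (2*s+1); simpa using this
    have h1R : 2 * (((2*s+1).choose 2 : ℕ):ℝ) = (2*(s:ℝ)+1) * (2*(s:ℝ)) := by
      have := congrArg (fun x : ℕ => (x:ℝ)) h1
      push_cast at this
      linarith [this]
    have hs0 : (0:ℝ) ≤ (s:ℝ) := by positivity
    nlinarith [hsreal, hck, hc45, hc1, hk2, hs0,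
      mul_nonneg (sub_nonneg.2 hsreal) (show (0:ℝ) ≤ c*k + 2*s by nlinarith),
      mul_nonneg (sub_nonneg.2 hc45) (mul_nonneg (show (0:ℝ) ≤ c by linarith) (sq_nonneg (k:ℝ)))]
  have hsknat : s ≤ k := by
    have : (s:ℝ) ≤ (k:ℝ) := by nlinarith
    exact_mod_cast this
  have hb2 : ((s.choose 2 + s * (k - s) : ℕ) : ℝ) < β * ((k.choose 2 : ℕ):ℝ) := by
    have h2 : 2 * (s.choose 2) + s = s * s := two_mul_choose_two' s
    have h2R : 2 * ((s.choose 2 : ℕ):ℝ) + (s:ℝ) = (s:ℝ) * (s:ℝ) := by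
      have := congrArg (fun x : ℕ => (x:ℝ)) h2
      push_cast at this
      linarith [this]
    have hksR : ((k - s : ℕ):ℝ) = (k:ℝ) - (s:ℝ) := by
      push_cast [Nat.cast_sub hsknat]; ring
    have hs0 : (0:ℝ) ≤ (s:ℝ) := by positivity
    push_cast [hksR]
    nlinarith [hsreal, hck, hc45, hc1, hk2, hs0, hchkR,
      mul_nonneg (sub_nonneg.2 hsreal) (show (0:ℝ) ≤ 2*(k:ℝ) - 2*(s:ℝ) - 1 by nlinarith),
      mul_nonneg (mul_nonneg (sub_nonneg.2 hc45) (show (0:ℝ) ≤ c by linarith)) (sq_nonneg (k:ℝ)),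
      mul_nonneg (sub_nonneg.2 hc1) (show (0:ℝ) ≤ (k:ℝ) by linarith),
      mul_nonneg (mul_nonneg (sub_nonneg.2 hc1) (show (0:ℝ) ≤ c by linarith)) (show (0:ℝ) ≤ (k:ℝ) by linarith)]
  -- contradiction
  have hmax : ((max ((2*s+1).choose 2) (s.choose 2 + s * (k - s)) : ℕ) : ℝ)
      < β * ((k.choose 2 : ℕ):ℝ) := by
    rw [Nat.cast_max]
    exact max_lt hb1 hb2
  have hle : ((pairsIn H Finset.univ).card : ℝ)
      ≤ ((max ((2*s+1).choose 2) (s.choose 2 + s * (k - s)) : ℕ) : ℝ) := by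
    exact_mod_cast hEG
  linarith [hdense, hle, hmax]

end EGaux

namespace EGaux

variable {V : Type} [Fintype V] [DecidableEq V] {G : SimpleGraph V}

lemma liftMatch {S : Finset V} {M : ℕ} (h : HasM (G.induce (S : Set V)) M) :
    ∃ F, IsM G F ∧ F.card = M ∧ msupp F ⊆ S := by
  classical
  obtain ⟨F', hF', hc⟩ := h
  refine ⟨F'.image (fun p => p.image Subtype.val), ⟨?_, ?_⟩, ?_, ?_⟩
  · intro q hq
    obtain ⟨p, hp, rfl⟩ := Finset.mem_image.mp hq
    obtain ⟨a, b, hab, rfl⟩ := hF'.1 p hp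
    refine ⟨a.val, b.val, ?_, ?_⟩
    · exact hab
    · rw [Finset.image_insert, Finset.image_singleton]
  · intro p hp q hq hne
    obtain ⟨p', hp', rfl⟩ := Finset.mem_image.mp hp
    obtain ⟨q', hq', rfl⟩ := Finset.mem_image.mp hq
    have hne' : p' ≠ q' := by rintro rfl; exact hne rfl
    have hd := hF'.2 p' hp' q' hq' hne'
    rw [Finset.disjoint_left]
    intro u hu hu'
    obtain ⟨x, hx, rfl⟩ := Finset.mem_image.mp hu
    obtain ⟨y, hy, hxy⟩ := Finset.mem_image.mp hu'
    have : y = x := Subtype.val_injective hxy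
    subst this
    exact Finset.disjoint_left.mp hd hx hy
  · rw [Finset.card_image_of_injective F' (Finset.image_injective Subtype.val_injective), hc]
  · intro v hv
    obtain ⟨q, hq, hvq⟩ := mem_msupp.mp hv
    obtain ⟨p, _, rfl⟩ := Finset.mem_image.mp hq
    obtain ⟨x, _, rfl⟩ := Finset.mem_image.mp hvq
    exact x.2

end EGaux

open EGaux in
/-- For a graph `G` on `n ≥ 1` vertices with `m ≥ 1` edges and `β ≥ 16/25`, the number
of `k`-subsets `S` whose induced subgraph has at least `β * C(k,2)` edges is at most
`m ^ (√β * k / 2 + 1) * n ^ ((1 - √β)k + 2)`. -/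
theorem count_beta_covered_large {V : Type} [Fintype V] (n m k : ℕ) (β : ℝ)
    (hβ0 : 16 / 25 ≤ β) (hβ1 : β ≤ 1) (hm : 1 ≤ m) (hn : 1 ≤ n) (hk : 1 ≤ k)
    (G : SimpleGraph V) (hcard : Fintype.card V = n) (hedges : G.edgeSet.ncard = m) :
    (({S : Finset V | S.card = k ∧
          β * (k.choose 2 : ℕ) ≤ ((G.induce (S : Set V)).edgeSet.ncard : ℝ)}.ncard : ℕ) : ℝ)
      ≤ (m : ℝ) ^ (Real.sqrt β * k / 2 + 1)
          * (n : ℝ) ^ ((1 - Real.sqrt β) * k + 2) := by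
  classical
  letI : DecidableEq V := Classical.decEq V
  set c := Real.sqrt β with hc
  have hβpos : (0:ℝ) ≤ β := by linarith
  have hc45 : (4/5 : ℝ) ≤ c := by
    rw [hc, show (4/5 : ℝ) = Real.sqrt (16/25) by
      rw [show (16/25 : ℝ) = (4/5)^2 by norm_num, Real.sqrt_sq (by norm_num)]]
    exact Real.sqrt_le_sqrt hβ0
  have hc1 : c ≤ 1 := by
    rw [hc, show (1:ℝ) = Real.sqrt 1 by simp]
    exact Real.sqrt_le_sqrt hβ1
  have hkR : (1:ℝ) ≤ (k:ℝ) := by exact_mod_cast hk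
  set τ := c * (k:ℝ) / 2 with hτ
  have hτpos : 0 < τ := by rw [hτ]; nlinarith
  set Mn := ⌈τ⌉₊ - 1 with hMn
  have hceil1 : 1 ≤ ⌈τ⌉₊ := Nat.one_le_ceil_iff.mpr hτpos
  have hMcast : (Mn : ℝ) = (⌈τ⌉₊ : ℝ) - 1 := by
    rw [hMn, Nat.cast_sub hceil1, Nat.cast_one]
  have hMle : (Mn : ℝ) ≤ τ := by
    have := Nat.ceil_lt_add_one hτpos.le
    rw [hMcast]; linarith
  have hMge : τ - 1 ≤ (Mn : ℝ) := by
    have := Nat.le_ceil τ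
    rw [hMcast]; linarith
  have h2M : 2 * Mn ≤ k := by
    have h1 : (2 * Mn : ℝ) ≤ (k:ℝ) := by
      rw [hτ] at hMle
      push_cast
      nlinarith
    exact_mod_cast h1
  set Scov := {S : Finset V | S.card = k ∧
    β * (k.choose 2 : ℕ) ≤ ((G.induce (S : Set V)).edgeSet.ncard : ℝ)} with hScov
  -- every covered set has an Mn-matching of G inside it
  have hex : ∀ S : Finset V, S ∈ Scov → ∃ F, IsM G F ∧ F.card = Mn ∧ msupp F ⊆ S := by
    intro S hS
    obtain ⟨hSk, hSd⟩ := hS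
    have hcardS : Fintype.card ↥(S : Set V) = k := by
      rw [← Set.toFinset_card, Finset.toFinset_coe]; exact hSk
    have hdense : β * ((Fintype.card ↥(S : Set V)).choose 2 : ℕ)
        ≤ (((pairsIn (G.induce (S : Set V)) Finset.univ).card : ℕ) : ℝ) := by
      rw [hcardS, ← edgeSet_ncard_eq_pairs]
      exact hSd
    have hM' : (Mn : ℝ) ≤ Real.sqrt β * (Fintype.card ↥(S : Set V)) / 2 := by
      rw [hcardS, ← hc]
      exact hMle.trans_eq hτ
    exact liftMatch (dense_hasM _ β hβ0 hβ1 Mn hM' hdense)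
  -- encoding
  set T := ((pairsIn G Finset.univ).powersetCard Mn) ×ˢ
    ((Finset.univ : Finset V).powersetCard (k - 2*Mn)) with hT
  set f : Finset V → Finset (Finset V) × Finset V := fun S =>
    if h : S ∈ Scov then ((hex S h).choose, S \ msupp (hex S h).choose) else (∅, ∅) with hf
  have hmaps : ∀ S ∈ Scov, f S ∈ (T : Set (Finset (Finset V) × Finset V)) := by
    intro S hS
    obtain ⟨hFm, hFc, hFs⟩ := (hex S hS).choose_spec
    have hfS : f S = ((hex S hS).choose, S \ msupp (hex S hS).choose) := by
      simp only [hf]; rw [dif_pos hS]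
    rw [hfS]
    have h1 : (hex S hS).choose ∈ (pairsIn G Finset.univ).powersetCard Mn := by
      refine Finset.mem_powersetCard.mpr ⟨?_, hFc⟩
      intro p hp
      exact mem_pairsIn.mpr ⟨hFm.1 p hp, Finset.subset_univ _⟩
    have h2 : S \ msupp (hex S hS).choose ∈
        (Finset.univ : Finset V).powersetCard (k - 2*Mn) := by
      refine Finset.mem_powersetCard.mpr ⟨Finset.subset_univ _, ?_⟩
      rw [Finset.card_sdiff_of_subset hFs, msupp_card hFm, hFc, hS.1]
    rw [Finset.mem_coe, hT]
    exact Finset.mem_product.mpr ⟨h1, h2⟩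
  have hinj : Set.InjOn f Scov := by
    intro S1 h1 S2 h2 heq
    have hf1 : f S1 = ((hex S1 h1).choose, S1 \ msupp (hex S1 h1).choose) := by
      simp only [hf]; rw [dif_pos h1]
    have hf2 : f S2 = ((hex S2 h2).choose, S2 \ msupp (hex S2 h2).choose) := by
      simp only [hf]; rw [dif_pos h2]
    rw [hf1, hf2, Prod.mk.injEq] at heq
    obtain ⟨hFeq, hReq⟩ := heq
    have hs1 := (hex S1 h1).choose_spec.2.2
    have hs2 := (hex S2 h2).choose_spec.2.2
    calc S1 = msupp (hex S1 h1).choose ∪ (S1 \ msupp (hex S1 h1).choose) :=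
        (Finset.union_sdiff_of_subset hs1).symm
    _ = msupp (hex S2 h2).choose ∪ (S2 \ msupp (hex S2 h2).choose) := by rw [hReq, hFeq]
    _ = S2 := Finset.union_sdiff_of_subset hs2
  have hcount : Scov.ncard ≤ T.card := by
    have := Set.ncard_le_ncard_of_injOn f hmaps hinj (Set.toFinite _)
    rwa [Set.ncard_coe_finset] at this
  have hTcard : T.card = m.choose Mn * n.choose (k - 2*Mn) := by
    rw [hT, Finset.card_product, Finset.card_powersetCard, Finset.card_powersetCard,
      Finset.card_univ, hcard, ← edgeSet_ncard_eq_pairs, hedges]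
  -- real arithmetic
  have hmR : (1:ℝ) ≤ (m:ℝ) := by exact_mod_cast hm
  have hnR : (1:ℝ) ≤ (n:ℝ) := by exact_mod_cast hn
  have hchain : (Scov.ncard : ℝ) ≤ (m:ℝ)^(Mn:ℕ) * (n:ℝ)^((k - 2*Mn : ℕ)) := by
    have h1 : Scov.ncard ≤ m^Mn * n^(k-2*Mn) := by
      calc Scov.ncard ≤ T.card := hcount
      _ = m.choose Mn * n.choose (k - 2*Mn) := hTcard
      _ ≤ m^Mn * n^(k-2*Mn) :=
          Nat.mul_le_mul (Nat.choose_le_pow m Mn) (Nat.choose_le_pow n (k-2*Mn))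
    exact_mod_cast h1
  have hrw1 : (m:ℝ)^(Mn:ℕ) = (m:ℝ) ^ ((Mn:ℕ):ℝ) := (Real.rpow_natCast _ _).symm
  have hrw2 : (n:ℝ)^((k-2*Mn:ℕ)) = (n:ℝ) ^ (((k-2*Mn:ℕ)):ℝ) := (Real.rpow_natCast _ _).symm
  have hexp1 : ((Mn:ℕ):ℝ) ≤ Real.sqrt β * k / 2 + 1 := by
    rw [← hc]
    have : c * k / 2 = τ := by rw [hτ]
    linarith [hMle]
  have hexp2 : (((k-2*Mn:ℕ)):ℝ) ≤ (1 - Real.sqrt β) * k + 2 := by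
    rw [← hc]
    have hcast : (((k-2*Mn:ℕ)):ℝ) = (k:ℝ) - 2*(Mn:ℝ) := by
      push_cast [Nat.cast_sub h2M]
      ring
    rw [hcast]
    have : τ - 1 ≤ (Mn:ℝ) := hMge
    rw [hτ] at this
    nlinarith
  calc (Scov.ncard : ℝ) ≤ (m:ℝ)^(Mn:ℕ) * (n:ℝ)^((k - 2*Mn : ℕ)) := hchain
  _ = (m:ℝ) ^ ((Mn:ℕ):ℝ) * (n:ℝ) ^ (((k-2*Mn:ℕ)):ℝ) := by rw [hrw1, hrw2]
  _ ≤ (m : ℝ) ^ (Real.sqrt β * k / 2 + 1) * (n : ℝ) ^ ((1 - Real.sqrt β) * k + 2) := by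
    apply mul_le_mul
    · exact Real.rpow_le_rpow_of_exponent_le hmR hexp1
    · exact Real.rpow_le_rpow_of_exponent_le hnR hexp2
    · exact Real.rpow_nonneg (by linarith) _
    · exact Real.rpow_nonneg (by linarith) _
end
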